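/- arXiv:1910.03920 — 5 statements merged into one kernel-verified Lean document; each statement's English description precedes it below -/
import Mathlib

section
/- Let (X,d,μ) be a metric measure space, 0<s<1, 0<p<∞ and 0<q≤∞. Let φ : X → ℝ be an L-Lipschitz function supported in a bounded measurable set F⊂X of finite measure. Then φ ∈ M^s_{p,q}(X) and ‖φ‖_{M^s_{p,q}(X)} ≤ C·(1+‖φ‖_∞)·(1+L^s)·μ(F)^{1/p}, where the constant C depends only on s and q. -/
open MeasureTheory Metric Set Filter ENNReal

/-- The `γ`-median of `u` over `A` w.r.t. `μ`. -/
noncomputable def med {X : Type*} [MeasurableSpace X] (μ : Measure X) (γ : ℝ)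
    (u : X → ℝ) (A : Set X) : ℝ :=
  sSup {M : ℝ | μ {x ∈ A | u x < M} ≤ ENNReal.ofReal γ * μ A}

/-- `(g k)_{k ∈ ℤ}` is a fractional `s`-gradient of `u` in `S`. -/
def IsFracGradient {X : Type*} [MetricSpace X] [MeasurableSpace X] (μ : Measure X)
    (s : ℝ) (u : X → ℝ) (S : Set X) (g : ℤ → X → ℝ) : Prop :=
  (∀ k, Measurable (g k)) ∧ (∀ k x, 0 ≤ g k x) ∧
  ∃ E : Set X, E ⊆ S ∧ μ E = 0 ∧ ∀ k : ℤ, ∀ x ∈ S \ E, ∀ y ∈ S \ E,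
    (2:ℝ) ^ (k - 1) ≤ dist x y → dist x y < (2:ℝ) ^ k →
    |u x - u y| ≤ dist x y ^ s * (g k x + g k y)

/-- The `ℓ^q` norm of a sequence indexed by `ℤ`. -/
noncomputable def lqNormE (q : ℝ≥0∞) (f : ℤ → ℝ) : ℝ≥0∞ :=
  if q = ∞ then ⨆ k, ENNReal.ofReal |f k|
  else (∑' k, ENNReal.ofReal |f k| ^ q.toReal) ^ (1 / q.toReal)

/-- The `L^p(S, ℓ^q)` norm of a sequence of functions (w.r.t. the measure `μ`). -/
noncomputable def lpLqNorm {X : Type*} [MeasurableSpace X] (μ : Measure X)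
    (p q : ℝ≥0∞) (g : ℤ → X → ℝ) : ℝ≥0∞ :=
  if p = ∞ then essSup (fun x => lqNormE q fun k => g k x) μ
  else (∫⁻ x, (lqNormE q fun k => g k x) ^ p.toReal ∂μ) ^ (1 / p.toReal)

/-- The Hajłasz–Triebel–Lizorkin (quasi)norm of `u` on `S`. -/
noncomputable def tlNorm {X : Type*} [MetricSpace X] [MeasurableSpace X] (μ : Measure X)
    (s : ℝ) (p q : ℝ≥0∞) (S : Set X) (u : X → ℝ) : ℝ≥0∞ :=
  eLpNorm u p (μ.restrict S) +
    ⨅ (g : ℤ → X → ℝ) (_ : IsFracGradient μ s u S g), lpLqNorm (μ.restrict S) p q g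

/-- Membership in the Hajłasz–Triebel–Lizorkin space `M^s_{p,q}(S)`. -/
def MemTL {X : Type*} [MetricSpace X] [MeasurableSpace X] (μ : Measure X)
    (s : ℝ) (p q : ℝ≥0∞) (S : Set X) (u : X → ℝ) : Prop :=
  MemLp u p (μ.restrict S) ∧ tlNorm μ s p q S u < ∞

/-- The Triebel–Lizorkin capacity of `E ⊆ X`. -/
noncomputable def tlCapacity {X : Type*} [MetricSpace X] [MeasurableSpace X] (μ : Measure X)
    (s : ℝ) (p q : ℝ≥0∞) (E : Set X) : ℝ≥0∞ :=
  ⨅ (u : X → ℝ) (_ : MemTL μ s p q univ u)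
    (_ : ∃ U : Set X, IsOpen U ∧ E ⊆ U ∧ ∀ x ∈ U, 1 ≤ u x),
    tlNorm μ s p q univ u ^ p.toReal

/-- `μ` is a doubling measure: balls have positive finite measure and a doubling constant exists. -/
def IsDoubling {X : Type*} [MetricSpace X] [MeasurableSpace X] (μ : Measure X) : Prop :=
  (∀ (x : X) (r : ℝ), 0 < r → 0 < μ (ball x r) ∧ μ (ball x r) < ∞) ∧
  ∃ c : ℝ≥0∞, 1 ≤ c ∧ c < ∞ ∧ ∀ (x : X) (r : ℝ), 0 < r → μ (ball x (2*r)) ≤ c * μ (ball x r)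

/-- Generalized Hausdorff measure with a gauge assigning weight `h x r` to the ball `B(x,r)`. -/
noncomputable def hMeasureBall {X : Type*} [MetricSpace X] (h : X → ℝ → ℝ≥0∞) (E : Set X) : ℝ≥0∞ :=
  ⨆ (δ : ℝ) (_ : 0 < δ), ⨅ (c : ℕ → X) (r : ℕ → ℝ)
    (_ : E ⊆ ⋃ i, ball (c i) (r i)) (_ : ∀ i, 0 < r i ∧ r i ≤ δ),
    ∑' i, h (c i) (r i)

/-- Generalized Hausdorff measure with radius gauge `h`. -/
noncomputable def hMeasure {X : Type*} [MetricSpace X] (h : ℝ → ℝ≥0∞) (E : Set X) : ℝ≥0∞ :=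
  hMeasureBall (fun _ r => h r) E

lemma lqNormE_zero (q : ℝ≥0∞) (hq0 : 0 < q) : lqNormE q (fun _ => 0) = 0 := by
  unfold lqNormE
  split_ifs with h
  · simp
  · have hq : 0 < q.toReal := ENNReal.toReal_pos hq0.ne' h
    simp only [abs_zero, ENNReal.ofReal_zero, ENNReal.zero_rpow_of_pos hq, tsum_zero]
    exact ENNReal.zero_rpow_of_pos (by positivity)

lemma lq_decay (q : ℝ≥0∞) (hq0 : 0 < q) (r : ℝ) (hr0 : 0 ≤ r) (hr1 : r < 1) :
    ∃ C2 : ℝ≥0∞, 0 < C2 ∧ C2 < ∞ ∧ ∀ (D : ℝ), 0 ≤ D → ∀ (k0 : ℤ) (a : ℤ → ℝ),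
      (∀ k, 0 ≤ a k) → (∀ k, a k ≤ D * r ^ (k - k0).natAbs) →
      lqNormE q a ≤ C2 * ENNReal.ofReal D := by
  by_cases hq : q = ∞
  · refine ⟨1, one_pos, one_lt_top, fun D hD k0 a ha hab => ?_⟩
    rw [one_mul]
    unfold lqNormE
    rw [if_pos hq]
    refine iSup_le fun k => ?_
    rw [abs_of_nonneg (ha k)]
    refine ENNReal.ofReal_le_ofReal ((hab k).trans ?_)
    calc D * r ^ (k - k0).natAbs ≤ D * 1 := by
          refine mul_le_mul_of_nonneg_left (pow_le_one₀ hr0 hr1.le) hD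
      _ = D := mul_one D
  · have hq' : 0 < q.toReal := ENNReal.toReal_pos hq0.ne' hq
    set q' := q.toReal
    set R : ℝ≥0∞ := ENNReal.ofReal r ^ q' with hR
    have hRlt : R < 1 := by
      rcases eq_or_lt_of_le hr0 with h0 | h0
      · rw [hR, ← h0]; simp [ENNReal.zero_rpow_of_pos hq']
      · exact ENNReal.rpow_lt_one (by simpa using hr1) hq'
    have hS : (∑' k : ℤ, R ^ (k : ℤ).natAbs) < ∞ := by
      rw [tsum_of_nat_of_neg_add_one (by exact ENNReal.summable) (by exact ENNReal.summable)]
      have h1 : (∑' n : ℕ, R ^ ((n : ℤ)).natAbs) = (1 - R)⁻¹ := by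
        simp_rw [Int.natAbs_natCast]; exact ENNReal.tsum_geometric R
      have h2 : (∑' n : ℕ, R ^ ((-(n + 1) : ℤ)).natAbs) ≤ (1 - R)⁻¹ := by
        calc (∑' n : ℕ, R ^ ((-(n + 1) : ℤ)).natAbs) = ∑' n : ℕ, R ^ (n + 1) :=
              tsum_congr fun n => by rw [show ((-(n + 1) : ℤ)).natAbs = n + 1 by omega]
          _ ≤ ∑' n : ℕ, R ^ n := ENNReal.tsum_le_tsum fun n => pow_le_pow_of_le_one
              (zero_le) (le_of_lt hRlt) (Nat.le_succ n)
          _ = (1 - R)⁻¹ := ENNReal.tsum_geometric R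
      have hfin : (1 - R)⁻¹ < ∞ := by
        rw [ENNReal.inv_lt_top]
        exact tsub_pos_of_lt hRlt
      calc _ = (1 - R)⁻¹ + ∑' n : ℕ, R ^ ((-(n + 1) : ℤ)).natAbs := by rw [h1]
        _ ≤ (1 - R)⁻¹ + (1 - R)⁻¹ := by gcongr
        _ < ∞ := ENNReal.add_lt_top.mpr ⟨hfin, hfin⟩
    set S : ℝ≥0∞ := ∑' k : ℤ, R ^ (k : ℤ).natAbs with hSdef
    have hS1 : 1 ≤ S := by
      have := ENNReal.le_tsum (f := fun k : ℤ => R ^ (k : ℤ).natAbs) 0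
      simpa using this
    refine ⟨S ^ (1 / q'), ?_, ?_, ?_⟩
    · have : (1:ℝ≥0∞) ^ (1/q') ≤ S ^ (1/q') := ENNReal.rpow_le_rpow hS1 (by positivity)
      simpa using lt_of_lt_of_le one_pos (by simpa using this)
    · exact ENNReal.rpow_lt_top_of_nonneg (by positivity) hS.ne
    · intro D hD k0 a ha hab
      unfold lqNormE
      rw [if_neg hq]
      have key : ∀ k : ℤ, ENNReal.ofReal |a k| ^ q' ≤
          (ENNReal.ofReal D) ^ q' * R ^ (k - k0).natAbs := by
        intro k
        have h1 : ENNReal.ofReal |a k| ≤ ENNReal.ofReal D * (ENNReal.ofReal r) ^ (k - k0).natAbs := by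
          rw [abs_of_nonneg (ha k), ← ENNReal.ofReal_pow hr0, ← ENNReal.ofReal_mul hD]
          exact ENNReal.ofReal_le_ofReal (hab k)
        calc ENNReal.ofReal |a k| ^ q'
            ≤ (ENNReal.ofReal D * (ENNReal.ofReal r) ^ (k - k0).natAbs) ^ q' :=
              ENNReal.rpow_le_rpow h1 hq'.le
          _ = (ENNReal.ofReal D) ^ q' * ((ENNReal.ofReal r) ^ (k - k0).natAbs) ^ q' :=
              ENNReal.mul_rpow_of_nonneg _ _ hq'.le
          _ = (ENNReal.ofReal D) ^ q' * R ^ (k - k0).natAbs := by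
              rw [hR, ← ENNReal.rpow_natCast (ENNReal.ofReal r), ← ENNReal.rpow_mul,
                mul_comm (((k - k0).natAbs : ℝ)) q', ENNReal.rpow_mul, ENNReal.rpow_natCast]
      calc (∑' k, ENNReal.ofReal |a k| ^ q') ^ (1 / q')
          ≤ (∑' k : ℤ, (ENNReal.ofReal D) ^ q' * R ^ (k - k0).natAbs) ^ (1 / q') :=
            ENNReal.rpow_le_rpow (ENNReal.tsum_le_tsum key) (by positivity)
        _ = ((ENNReal.ofReal D) ^ q' * ∑' k : ℤ, R ^ (k - k0).natAbs) ^ (1 / q') := by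
            rw [ENNReal.tsum_mul_left]
        _ = ((ENNReal.ofReal D) ^ q' * S) ^ (1 / q') := by
            rw [hSdef, ← (Equiv.subRight k0).tsum_eq (fun k : ℤ => R ^ (k : ℤ).natAbs)]
            rfl
        _ = (ENNReal.ofReal D) * S ^ (1 / q') := by
            rw [ENNReal.mul_rpow_of_nonneg _ _ (by positivity), ← ENNReal.rpow_mul,
              mul_one_div, div_self hq'.ne', ENNReal.rpow_one]
        _ = S ^ (1 / q') * ENNReal.ofReal D := mul_comm _ _

lemma min_decay (s : ℝ) (hs0 : 0 < s) (hs1 : s < 1) (L M : ℝ) (hL : 0 < L) (hM : 0 < M) :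
    ∃ k0 : ℤ, ∀ k : ℤ,
      min (L * (2:ℝ) ^ ((k:ℝ)*(1-s))) (2*M * (2:ℝ) ^ ((1-(k:ℝ))*s))
        ≤ (8 * (L ^ s * (1+M))) * ((2:ℝ) ^ (-(min s (1-s)))) ^ (k - k0).natAbs := by
  have h2 : (0:ℝ) < 2 := two_pos
  have hs1' : 0 < 1 - s := by linarith
  set β : ℝ := (2:ℝ) ^ (1+s) * M with hβ
  have hβ0 : 0 < β := by positivity
  set t : ℝ := β / L with ht
  have ht0 : 0 < t := by positivity
  set k0 : ℤ := ⌊Real.logb 2 t⌋ with hk0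
  have hk0a : (2:ℝ) ^ (k0:ℝ) ≤ t := by
    calc (2:ℝ) ^ (k0:ℝ) ≤ (2:ℝ) ^ (Real.logb 2 t) :=
        Real.rpow_le_rpow_of_exponent_le one_le_two (Int.floor_le _)
      _ = t := Real.rpow_logb h2 (by norm_num) ht0
  have hk0b : t ≤ 2 * (2:ℝ) ^ (k0:ℝ) := by
    have := (Int.lt_floor_add_one (Real.logb 2 t)).le
    calc t = (2:ℝ) ^ (Real.logb 2 t) := (Real.rpow_logb h2 (by norm_num) ht0).symm
      _ ≤ (2:ℝ) ^ ((k0:ℝ) + 1) := Real.rpow_le_rpow_of_exponent_le one_le_two this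
      _ = 2 * (2:ℝ) ^ (k0:ℝ) := by rw [Real.rpow_add h2, Real.rpow_one]; ring
  set D : ℝ := 8 * (L ^ s * (1+M)) with hD
  set r : ℝ := (2:ℝ) ^ (-(min s (1-s))) with hr
  have hr0 : 0 < r := Real.rpow_pos_of_pos h2 _
  -- core products
  have hLβ : L ^ s * β ^ (1-s) ≤ 4 * (L ^ s * (1+M)) := by
    have hM1 : M ^ (1-s) ≤ 1 + M := by
      rcases le_total M 1 with h | h
      · calc M ^ (1-s) ≤ 1 ^ (1-s) := Real.rpow_le_rpow hM.le h hs1'.le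
          _ = 1 := Real.one_rpow _
          _ ≤ 1 + M := by linarith
      · calc M ^ (1-s) ≤ M ^ (1:ℝ) :=
            Real.rpow_le_rpow_of_exponent_le h (by linarith)
          _ = M := Real.rpow_one M
          _ ≤ 1 + M := by linarith
    have h4 : ((2:ℝ) ^ (1+s)) ^ (1-s) ≤ 4 := by
      rw [← Real.rpow_mul h2.le]
      calc (2:ℝ) ^ ((1+s)*(1-s)) ≤ (2:ℝ) ^ (2:ℝ) :=
            Real.rpow_le_rpow_of_exponent_le one_le_two (by nlinarith)
        _ = 4 := by
            rw [show ((2:ℝ):ℝ) = ((2:ℕ):ℝ) by norm_num, Real.rpow_natCast]; norm_num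
    calc L ^ s * β ^ (1-s) = L ^ s * (((2:ℝ) ^ (1+s)) ^ (1-s) * M ^ (1-s)) := by
          rw [hβ, Real.mul_rpow (by positivity) hM.le]
      _ ≤ L ^ s * (4 * (1+M)) := by
          refine mul_le_mul_of_nonneg_left ?_ (by positivity)
          exact mul_le_mul h4 hM1 (by positivity) (by norm_num)
      _ = 4 * (L ^ s * (1+M)) := by ring
  have hLk0 : L * ((2:ℝ) ^ (k0:ℝ)) ^ (1-s) ≤ L ^ s * β ^ (1-s) := by
    calc L * ((2:ℝ) ^ (k0:ℝ)) ^ (1-s) ≤ L * t ^ (1-s) := by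
          refine mul_le_mul_of_nonneg_left ?_ hL.le
          exact Real.rpow_le_rpow (by positivity) hk0a hs1'.le
      _ = L ^ s * β ^ (1-s) := by
          have hLne : L ^ (1-s) ≠ 0 := (Real.rpow_pos_of_pos hL _).ne'
          have hLs : L ^ s = L / L ^ (1-s) := by
            rw [eq_div_iff hLne, ← Real.rpow_add hL]; norm_num
          rw [ht, Real.div_rpow hβ0.le hL.le, hLs]
          field_simp
  have hβk0 : β * ((2:ℝ) ^ (k0:ℝ)) ^ (-s) ≤ 2 * (L ^ s * β ^ (1-s)) := by
    have h1 : ((2:ℝ) ^ (k0:ℝ)) ^ (-s) ≤ (t/2) ^ (-s) := by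
      refine Real.rpow_le_rpow_of_nonpos (by positivity) (by linarith) (by linarith)
    have h2' : (t/2) ^ (-s) = 2 ^ s * t ^ (-s) := by
      rw [Real.div_rpow ht0.le h2.le, Real.rpow_neg h2.le, div_eq_mul_inv, inv_inv, mul_comm]
    have h3 : β * t ^ (-s) = L ^ s * β ^ (1-s) := by
      have hLne : L ^ s ≠ 0 := (Real.rpow_pos_of_pos hL _).ne'
      have hβne : β ^ s ≠ 0 := (Real.rpow_pos_of_pos hβ0 _).ne'
      have hβs : β ^ (1-s) = β / β ^ s := by
        rw [eq_div_iff hβne, ← Real.rpow_add hβ0]; norm_num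
      rw [Real.rpow_neg ht0.le, ht, Real.div_rpow hβ0.le hL.le, hβs]
      field_simp
    have h2s : (2:ℝ) ^ s ≤ 2 := by
      calc (2:ℝ) ^ s ≤ (2:ℝ) ^ (1:ℝ) := Real.rpow_le_rpow_of_exponent_le one_le_two hs1.le
        _ = 2 := Real.rpow_one 2
    calc β * ((2:ℝ) ^ (k0:ℝ)) ^ (-s) ≤ β * (2 ^ s * t ^ (-s)) := by
          rw [← h2']; exact mul_le_mul_of_nonneg_left h1 hβ0.le
      _ = 2 ^ s * (β * t ^ (-s)) := by ring
      _ = 2 ^ s * (L ^ s * β ^ (1-s)) := by rw [h3]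
      _ ≤ 2 * (L ^ s * β ^ (1-s)) := by
          refine mul_le_mul_of_nonneg_right h2s (by positivity)
  refine ⟨k0, fun k => ?_⟩
  rcases le_total k k0 with hk | hk
  · -- use the first term
    set n : ℕ := (k - k0).natAbs with hn
    have hnk : (n:ℤ) = k0 - k := by rw [hn]; omega
    have hkn : (k:ℝ) = (k0:ℝ) - n := by
      have := congrArg (fun z : ℤ => (z:ℝ)) hnk
      push_cast at this; linarith
    refine (min_le_left _ _).trans ?_
    have hsplit : (2:ℝ) ^ ((k:ℝ)*(1-s)) = ((2:ℝ) ^ (k0:ℝ)) ^ (1-s) * ((2:ℝ) ^ (-(1-s))) ^ n := by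
      rw [← Real.rpow_natCast ((2:ℝ) ^ (-(1-s))) n, ← Real.rpow_mul h2.le,
        ← Real.rpow_mul h2.le, ← Real.rpow_add h2, hkn]
      ring_nf
    rw [hsplit, ← mul_assoc]
    have hfac : L * ((2:ℝ) ^ (k0:ℝ)) ^ (1-s) ≤ D := by
      refine hLk0.trans (hLβ.trans ?_)
      rw [hD]; nlinarith [Real.rpow_nonneg hL.le s, hM.le]
    refine mul_le_mul hfac ?_ (by positivity) (by positivity)
    refine pow_le_pow_left₀ (by positivity) ?_ n
    rw [hr]
    exact Real.rpow_le_rpow_of_exponent_le one_le_two (by have := min_le_right s (1-s); linarith)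
  · -- use the second term
    set n : ℕ := (k - k0).natAbs with hn
    have hnk : (n:ℤ) = k - k0 := by rw [hn]; omega
    have hkn : (k:ℝ) = (k0:ℝ) + n := by
      have := congrArg (fun z : ℤ => (z:ℝ)) hnk
      push_cast at this; linarith
    refine (min_le_right _ _).trans ?_
    have heq : 2*M * (2:ℝ) ^ ((1-(k:ℝ))*s) = β * (2:ℝ) ^ (-(k:ℝ)*s) := by
      rw [hβ, show (1-(k:ℝ))*s = s + (-(k:ℝ)*s) by ring, Real.rpow_add h2,
        Real.rpow_add h2, Real.rpow_one]
      ring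
    rw [heq]
    have hsplit : (2:ℝ) ^ (-(k:ℝ)*s) = ((2:ℝ) ^ (k0:ℝ)) ^ (-s) * ((2:ℝ) ^ (-s)) ^ n := by
      rw [← Real.rpow_natCast ((2:ℝ) ^ (-s)) n, ← Real.rpow_mul h2.le,
        ← Real.rpow_mul h2.le, ← Real.rpow_add h2, hkn]
      ring_nf
    rw [hsplit, ← mul_assoc]
    have hfac : β * ((2:ℝ) ^ (k0:ℝ)) ^ (-s) ≤ D := by
      refine hβk0.trans ?_
      rw [hD]; nlinarith [Real.rpow_nonneg hL.le s, hM.le, hLβ]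
    refine mul_le_mul hfac ?_ (by positivity) (by positivity)
    refine pow_le_pow_left₀ (by positivity) ?_ n
    rw [hr]
    exact Real.rpow_le_rpow_of_exponent_le one_le_two (by have := min_le_left s (1-s); linarith)

lemma key_lq (s : ℝ) (q : ℝ≥0∞) (hs0 : 0 < s) (hs1 : s < 1) (hq0 : 0 < q) :
    ∃ C1 : ℝ≥0∞, 0 < C1 ∧ C1 < ∞ ∧ ∀ (L M : ℝ), 0 ≤ L → 0 ≤ M →
      lqNormE q (fun k : ℤ =>
          min (L * (2:ℝ) ^ ((k:ℝ)*(1-s))) (2*M * (2:ℝ) ^ ((1-(k:ℝ))*s)))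
        ≤ C1 * (1 + ENNReal.ofReal M) * (1 + ENNReal.ofReal (L ^ s)) := by
  have hs1' : 0 < 1 - s := by linarith
  set r : ℝ := (2:ℝ) ^ (-(min s (1-s))) with hrdef
  have hr0 : 0 ≤ r := (Real.rpow_pos_of_pos two_pos _).le
  have hr1 : r < 1 := by
    refine Real.rpow_lt_one_of_one_lt_of_neg one_lt_two ?_
    simp only [neg_neg, Left.neg_neg_iff]
    exact lt_min hs0 hs1'
  obtain ⟨C2, hC20, hC2top, hC2⟩ := lq_decay q hq0 r hr0 hr1
  refine ⟨8 * C2, ENNReal.mul_pos (by norm_num) hC20.ne', by finiteness, fun L M hL hM => ?_⟩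
  rcases eq_or_lt_of_le hL with hL0 | hL0
  · have : (fun k : ℤ =>
        min (L * (2:ℝ) ^ ((k:ℝ)*(1-s))) (2*M * (2:ℝ) ^ ((1-(k:ℝ))*s))) = fun _ => 0 := by
      funext k
      rw [← hL0, zero_mul]
      exact min_eq_left (by positivity)
    rw [this, lqNormE_zero q hq0]
    exact zero_le
  rcases eq_or_lt_of_le hM with hM0 | hM0
  · have : (fun k : ℤ =>
        min (L * (2:ℝ) ^ ((k:ℝ)*(1-s))) (2*M * (2:ℝ) ^ ((1-(k:ℝ))*s))) = fun _ => 0 := by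
      funext k
      rw [← hM0]
      simp only [mul_zero, zero_mul]
      exact min_eq_right (by positivity)
    rw [this, lqNormE_zero q hq0]
    exact zero_le
  obtain ⟨k0, hk0⟩ := min_decay s hs0 hs1 L M hL0 hM0
  have hbound := hC2 (8 * (L ^ s * (1+M))) (by positivity) k0 _
    (fun k => le_min (by positivity) (by positivity)) hk0
  refine hbound.trans ?_
  have heq : ENNReal.ofReal (8 * (L ^ s * (1+M)))
      = 8 * (ENNReal.ofReal (L ^ s) * (1 + ENNReal.ofReal M)) := by
    rw [ENNReal.ofReal_mul (by norm_num), ENNReal.ofReal_mul (by positivity),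
      ENNReal.ofReal_add one_pos.le hM, ENNReal.ofReal_one]
    norm_num
  rw [heq]
  calc C2 * (8 * (ENNReal.ofReal (L ^ s) * (1 + ENNReal.ofReal M)))
      = 8 * C2 * (1 + ENNReal.ofReal M) * ENNReal.ofReal (L ^ s) := by ring
    _ ≤ 8 * C2 * (1 + ENNReal.ofReal M) * (1 + ENNReal.ofReal (L ^ s)) := by
        gcongr
        exact le_add_self

lemma core_ineq (s : ℝ) (hs0 : 0 < s) (hs1 : s < 1) (L M u v d : ℝ) (hM : 0 ≤ M)
    (hu : |u| ≤ M) (hv : |v| ≤ M) (hL : 0 ≤ L) (huv : |u - v| ≤ L * d) (k : ℤ)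
    (hd1 : (2:ℝ) ^ (k - 1) ≤ d) (hd2 : d < (2:ℝ) ^ k) :
    |u - v| ≤ d ^ s * min (L * (2:ℝ) ^ ((k:ℝ)*(1-s))) (2*M * (2:ℝ) ^ ((1-(k:ℝ))*s)) := by
  have h2 : (0:ℝ) < 2 := two_pos
  have hd0 : 0 < d := lt_of_lt_of_le (zpow_pos h2 _) hd1
  rw [mul_min_of_nonneg _ _ (by positivity : (0:ℝ) ≤ d ^ s), le_min_iff]
  constructor
  · -- Lipschitz bound
    have hds : d = d ^ s * d ^ (1-s) := by
      rw [← Real.rpow_add hd0]; norm_num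
    have hexp : d ^ (1-s) ≤ (2:ℝ) ^ ((k:ℝ)*(1-s)) := by
      calc d ^ (1-s) ≤ ((2:ℝ) ^ (k:ℤ)) ^ (1-s) :=
            Real.rpow_le_rpow hd0.le hd2.le (by linarith)
        _ = (2:ℝ) ^ ((k:ℝ)*(1-s)) := by
            rw [← Real.rpow_intCast 2 k, ← Real.rpow_mul h2.le]
    calc |u - v| ≤ L * d := huv
      _ = L * (d ^ s * d ^ (1-s)) := by rw [← hds]
      _ ≤ L * (d ^ s * (2:ℝ) ^ ((k:ℝ)*(1-s))) := by
          refine mul_le_mul_of_nonneg_left ?_ hL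
          exact mul_le_mul_of_nonneg_left hexp (by positivity)
      _ = d ^ s * (L * (2:ℝ) ^ ((k:ℝ)*(1-s))) := by ring
  · -- sup bound
    have hds : (2:ℝ) ^ (((k:ℝ)-1)*s) ≤ d ^ s := by
      calc (2:ℝ) ^ (((k:ℝ)-1)*s) = ((2:ℝ) ^ ((k-1:ℤ):ℝ)) ^ s := by
            rw [← Real.rpow_mul h2.le]; push_cast; ring_nf
        _ = ((2:ℝ) ^ ((k:ℤ)-1)) ^ s := by rw [Real.rpow_intCast]
        _ ≤ d ^ s := Real.rpow_le_rpow (by positivity) hd1 hs0.le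
    have key : 2*M ≤ d ^ s * (2*M * (2:ℝ) ^ ((1-(k:ℝ))*s)) := by
      calc 2*M = 2*M * ((2:ℝ) ^ (((k:ℝ)-1)*s) * (2:ℝ) ^ ((1-(k:ℝ))*s)) := by
            rw [← Real.rpow_add h2,
              show ((k:ℝ)-1)*s + (1-(k:ℝ))*s = 0 by ring, Real.rpow_zero, mul_one]
        _ ≤ 2*M * (d ^ s * (2:ℝ) ^ ((1-(k:ℝ))*s)) := by
            refine mul_le_mul_of_nonneg_left ?_ (by positivity)
            exact mul_le_mul_of_nonneg_right hds (by positivity)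
        _ = d ^ s * (2*M * (2:ℝ) ^ ((1-(k:ℝ))*s)) := by ring
    calc |u - v| ≤ |u| + |v| := abs_sub _ _
      _ ≤ 2*M := by linarith
      _ ≤ _ := key


/-- an `L`-Lipschitz function supported in a bounded set `F` of finite measure
belongs to `M^s_{p,q}(X)` with `‖φ‖_{M^s_{p,q}(X)} ≤ C (1+‖φ‖_∞)(1+L^s) μ(F)^{1/p}`, where `C`
depends only on `s` and `q`. -/
theorem lipschitz_memTL (s : ℝ) (q : ℝ≥0∞) (hs0 : 0 < s) (hs1 : s < 1) (hq0 : 0 < q) :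
    ∃ C : ℝ≥0∞, 0 < C ∧ C < ∞ ∧
      ∀ (X : Type) [MetricSpace X] [MeasurableSpace X] [BorelSpace X] (μ : Measure X)
        (p : ℝ≥0∞), 0 < p → p ≠ ∞ →
      ∀ (F : Set X), MeasurableSet F → Bornology.IsBounded F → μ F < ∞ →
      ∀ (φ : X → ℝ) (L : ℝ), 0 ≤ L → (∀ x y : X, |φ x - φ y| ≤ L * dist x y) →
        tsupport φ ⊆ F →
      MemTL μ s p q univ φ ∧
      tlNorm μ s p q univ φ ≤
        C * (1 + ENNReal.ofReal (⨆ x, |φ x|)) * (1 + ENNReal.ofReal (L ^ s)) *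
          μ F ^ (1 / p.toReal) := by
  obtain ⟨C1, hC10, hC1top, hC1⟩ := key_lq s q hs0 hs1 hq0
  refine ⟨1 + C1, lt_of_lt_of_le one_pos le_self_add, by finiteness, ?_⟩
  intro X _ _ _ μ p hp0 hptop F hFmeas hFbdd hFfin φ L hL hLip hsupp
  have hp' : 0 < p.toReal := ENNReal.toReal_pos hp0.ne' hptop
  set M : ℝ := ⨆ x, |φ x| with hMdef
  have hφcont : Continuous φ := by
    have : LipschitzWith (Real.toNNReal L) φ := by
      refine LipschitzWith.of_dist_le_mul fun x y => ?_
      rw [Real.dist_eq]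
      calc |φ x - φ y| ≤ L * dist x y := hLip x y
        _ ≤ Real.toNNReal L * dist x y :=
            mul_le_mul_of_nonneg_right (Real.le_coe_toNNReal L) dist_nonneg
    exact this.continuous
  have hBdd : BddAbove (Set.range fun x => |φ x|) := by
    cases isEmpty_or_nonempty X with
    | inl h => rw [Set.range_eq_empty]; exact bddAbove_empty
    | inr h =>
      obtain ⟨c⟩ := h
      obtain ⟨R, hR⟩ := hFbdd.subset_closedBall c
      refine ⟨max (L * R + |φ c|) 0, ?_⟩
      rintro _ ⟨x, rfl⟩
      show |φ x| ≤ max (L * R + |φ c|) 0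
      by_cases hx : x ∈ tsupport φ
      · have hd : dist x c ≤ R := by
          have := hR (hsupp hx); simpa [Metric.mem_closedBall] using this
        have h1 : |φ x| - |φ c| ≤ |φ x - φ c| := abs_sub_abs_le_abs_sub _ _
        have h2 : L * dist x c ≤ L * R := mul_le_mul_of_nonneg_left hd hL
        have := hLip x c
        refine le_max_of_le_left (by linarith)
      · rw [image_eq_zero_of_notMem_tsupport hx]
        simp
  have hMle : ∀ x, |φ x| ≤ M := fun x => le_ciSup hBdd x
  have hM0 : 0 ≤ M := Real.iSup_nonneg fun x => abs_nonneg _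
  set T : Set X := tsupport φ with hTdef
  have hTmeas : MeasurableSet T := (isClosed_tsupport φ).measurableSet
  have hTF : T ⊆ F := hsupp
  set a : ℤ → ℝ := fun k =>
    min (L * (2:ℝ) ^ ((k:ℝ)*(1-s))) (2*M * (2:ℝ) ^ ((1-(k:ℝ))*s)) with hadef
  have ha0 : ∀ k, 0 ≤ a k := fun k => le_min (by positivity) (by positivity)
  set g : ℤ → X → ℝ := fun k => T.indicator (fun _ => a k) with hgdef
  have hgrad : IsFracGradient μ s φ univ g := by
    refine ⟨fun k => measurable_const.indicator hTmeas, ?_, ∅, empty_subset _,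
      measure_empty, ?_⟩
    · intro k x
      by_cases hx : x ∈ T <;> simp [hgdef, Set.indicator_apply, hx, ha0 k]
    · intro k x _ y _ hd1 hd2
      by_cases hxy : x ∈ T ∨ y ∈ T
      · have hak : a k ≤ g k x + g k y := by
          rcases hxy with hx | hy
          · have h1 : g k x = a k := by simp [hgdef, Set.indicator_of_mem hx]
            have h2 : 0 ≤ g k y := by
              by_cases hy : y ∈ T <;> simp [hgdef, Set.indicator_apply, hy, ha0 k]
            linarith
          · have h1 : g k y = a k := by simp [hgdef, Set.indicator_of_mem hy]
            have h2 : 0 ≤ g k x := by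
              by_cases hx : x ∈ T <;> simp [hgdef, Set.indicator_apply, hx, ha0 k]
            linarith
        have hcore := core_ineq s hs0 hs1 L M (φ x) (φ y) (dist x y) hM0
          (hMle x) (hMle y) hL (hLip x y) k hd1 hd2
        refine hcore.trans ?_
        exact mul_le_mul_of_nonneg_left hak (by positivity)
      · push_neg at hxy
        rw [image_eq_zero_of_notMem_tsupport hxy.1, image_eq_zero_of_notMem_tsupport hxy.2]
        simp only [sub_zero, abs_zero]
        have h1 : 0 ≤ g k x := by simp [hgdef, Set.indicator_of_notMem hxy.1]
        have h2 : 0 ≤ g k y := by simp [hgdef, Set.indicator_of_notMem hxy.2]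
        positivity
  set A : ℝ≥0∞ := lqNormE q a with hAdef
  have hAle : A ≤ C1 * (1 + ENNReal.ofReal M) * (1 + ENNReal.ofReal (L ^ s)) :=
    hC1 L M hL hM0
  have hAfin : A < ∞ := lt_of_le_of_lt hAle (by finiteness)
  -- pointwise lq norm of g
  have hgpt : ∀ x : X, (lqNormE q fun k => g k x) = T.indicator (fun _ => A) x := by
    intro x
    by_cases hx : x ∈ T
    · have : (fun k => g k x) = a := by
        funext k; simp [hgdef, Set.indicator_of_mem hx]
      rw [this, Set.indicator_of_mem hx]
    · have : (fun k => g k x) = fun _ => 0 := by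
        funext k; simp [hgdef, Set.indicator_of_notMem hx]
      rw [this, lqNormE_zero q hq0, Set.indicator_of_notMem hx]
  -- lpLq norm of g
  have hlpLq : lpLqNorm μ p q g ≤ A * μ F ^ (1 / p.toReal) := by
    unfold lpLqNorm
    rw [if_neg hptop]
    have heq : ∀ x : X, (lqNormE q fun k => g k x) ^ p.toReal
        = T.indicator (fun _ => A ^ p.toReal) x := by
      intro x
      rw [hgpt x]
      by_cases hx : x ∈ T
      · simp only [Set.indicator_of_mem hx]
      · simp only [Set.indicator_of_notMem hx]
        exact ENNReal.zero_rpow_of_pos hp'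
    calc (∫⁻ x, (lqNormE q fun k => g k x) ^ p.toReal ∂μ) ^ (1 / p.toReal)
        = (∫⁻ x, T.indicator (fun _ => A ^ p.toReal) x ∂μ) ^ (1 / p.toReal) := by
          congr 1; exact lintegral_congr heq
      _ = (A ^ p.toReal * μ T) ^ (1 / p.toReal) := by
          rw [lintegral_indicator_const hTmeas]
      _ ≤ (A ^ p.toReal * μ F) ^ (1 / p.toReal) := by
          gcongr
      _ = A * μ F ^ (1 / p.toReal) := by
          rw [ENNReal.mul_rpow_of_nonneg _ _ (by positivity), ← ENNReal.rpow_mul,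
            mul_one_div, div_self hp'.ne', ENNReal.rpow_one]
  -- eLpNorm bound
  have heLp : eLpNorm φ p μ ≤ ENNReal.ofReal M * μ F ^ (1 / p.toReal) := by
    rw [eLpNorm_eq_lintegral_rpow_enorm_toReal hp0.ne' hptop]
    have hb : ∀ x : X, ((‖φ x‖₊ : ℝ≥0∞)) ^ p.toReal
        ≤ T.indicator (fun _ => ENNReal.ofReal M ^ p.toReal) x := by
      intro x
      by_cases hx : x ∈ T
      · rw [Set.indicator_of_mem hx, ← enorm_eq_nnnorm, Real.enorm_eq_ofReal_abs]
        exact ENNReal.rpow_le_rpow (ENNReal.ofReal_le_ofReal (hMle x)) hp'.le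
      · rw [Set.indicator_of_notMem hx, image_eq_zero_of_notMem_tsupport hx]
        simp [ENNReal.zero_rpow_of_pos hp']
    calc (∫⁻ x, ((‖φ x‖₊ : ℝ≥0∞)) ^ p.toReal ∂μ) ^ (1 / p.toReal)
        ≤ (∫⁻ x, T.indicator (fun _ => ENNReal.ofReal M ^ p.toReal) x ∂μ) ^ (1 / p.toReal) :=
          ENNReal.rpow_le_rpow (lintegral_mono hb) (by positivity)
      _ = (ENNReal.ofReal M ^ p.toReal * μ T) ^ (1 / p.toReal) := by
          rw [lintegral_indicator_const hTmeas]
      _ ≤ (ENNReal.ofReal M ^ p.toReal * μ F) ^ (1 / p.toReal) := by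
          gcongr
      _ = ENNReal.ofReal M * μ F ^ (1 / p.toReal) := by
          rw [ENNReal.mul_rpow_of_nonneg _ _ (by positivity), ← ENNReal.rpow_mul,
            mul_one_div, div_self hp'.ne', ENNReal.rpow_one]
  have hμF : μ F ^ (1 / p.toReal) < ∞ :=
    ENNReal.rpow_lt_top_of_nonneg (by positivity) hFfin.ne
  -- tlNorm bound
  have htl : tlNorm μ s p q univ φ ≤
      (1 + C1) * (1 + ENNReal.ofReal M) * (1 + ENNReal.ofReal (L ^ s)) *
        μ F ^ (1 / p.toReal) := by
    unfold tlNorm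
    rw [Measure.restrict_univ]
    have hinf : (⨅ (g' : ℤ → X → ℝ) (_ : IsFracGradient μ s φ univ g'), lpLqNorm μ p q g')
        ≤ lpLqNorm μ p q g := iInf₂_le g hgrad
    calc eLpNorm φ p μ + (⨅ (g' : ℤ → X → ℝ) (_ : IsFracGradient μ s φ univ g'),
            lpLqNorm μ p q g')
        ≤ ENNReal.ofReal M * μ F ^ (1 / p.toReal) + A * μ F ^ (1 / p.toReal) := by
          exact add_le_add heLp (hinf.trans hlpLq)
      _ ≤ (1 + ENNReal.ofReal M) * (1 + ENNReal.ofReal (L ^ s)) * μ F ^ (1 / p.toReal)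
          + C1 * (1 + ENNReal.ofReal M) * (1 + ENNReal.ofReal (L ^ s)) *
            μ F ^ (1 / p.toReal) := by
          gcongr
          calc ENNReal.ofReal M ≤ (1 + ENNReal.ofReal M) * 1 := by
                rw [mul_one]; exact le_add_self
            _ ≤ (1 + ENNReal.ofReal M) * (1 + ENNReal.ofReal (L ^ s)) := by
                gcongr; exact le_self_add
      _ = (1 + C1) * (1 + ENNReal.ofReal M) * (1 + ENNReal.ofReal (L ^ s)) *
            μ F ^ (1 / p.toReal) := by ring
  refine ⟨⟨?_, ?_⟩, htl⟩
  · rw [Measure.restrict_univ]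
    exact ⟨hφcont.aestronglyMeasurable, lt_of_le_of_lt heLp (by finiteness)⟩
  · exact lt_of_le_of_lt htl (by finiteness)
end

section
/- Let (X,d,μ) be a doubling metric measure space, 0<s<1, 0<p<∞ and 0<q≤∞. Then there exists a constant C₁ (depending only on s, p, q and the doubling constant) such that for every x ∈ X and every 0<r≤1, cap_{M^s_{p,q}}(B(x,r)) ≤ C₁·μ(B(x,r))/r^{sp}. -/
open MeasureTheory Metric Set Filter ENNReal

section AuxCapacity

open Real

lemma clamp_abs_le' (a b : ℝ) : |max 0 (min 1 a) - max 0 (min 1 b)| ≤ |a - b| := by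
  rw [max_comm (0:ℝ) (min 1 a), max_comm (0:ℝ) (min 1 b)]
  refine (abs_max_sub_max_le_abs (min 1 a) (min 1 b) 0).trans ?_
  simpa using abs_min_sub_min_le_max 1 a 1 b

lemma zsum_geom' {τ : ℝ≥0∞} (hτ : τ ≤ 1) :
    (∑' k : ℤ, τ ^ (k.toNat) * τ ^ ((-k).toNat)) ≤ 2 * (1 - τ)⁻¹ := by
  rw [tsum_of_nat_of_neg_add_one ENNReal.summable ENNReal.summable]
  have h1 : (∑' n : ℕ, τ ^ ((n:ℤ)).toNat * τ ^ ((-(n:ℤ))).toNat) ≤ (1 - τ)⁻¹ := by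
    calc _ ≤ ∑' n : ℕ, τ ^ n := by
          refine ENNReal.tsum_le_tsum fun n => ?_
          have h2 : ((n:ℤ)).toNat = n := by omega
          have h3 : ((-(n:ℤ))).toNat = 0 := by omega
          rw [h2, h3, pow_zero, mul_one]
      _ = (1 - τ)⁻¹ := ENNReal.tsum_geometric τ
  have h2 : (∑' n : ℕ, τ ^ ((-((n:ℤ) + 1)).toNat) * τ ^ ((-(-((n:ℤ)+1))).toNat)) ≤ (1 - τ)⁻¹ := by
    calc _ ≤ ∑' n : ℕ, τ ^ n := by
          refine ENNReal.tsum_le_tsum fun n => ?_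
          have h3 : ((-((n:ℤ) + 1))).toNat = 0 := by omega
          have h4 : ((-(-((n:ℤ)+1)))).toNat = n + 1 := by omega
          rw [h3, h4, pow_zero, one_mul]
          exact pow_le_pow_of_le_one zero_le hτ (Nat.le_succ n)
      _ = (1 - τ)⁻¹ := ENNReal.tsum_geometric τ
  calc _ ≤ (1-τ)⁻¹ + (1-τ)⁻¹ := add_le_add h1 h2
    _ = 2 * (1-τ)⁻¹ := by ring

lemma ck_bound' (s r : ℝ) (hs0 : 0 < s) (hs1 : s < 1) (hr : 0 < r) (k : ℤ) :
    min ((2:ℝ)^((k:ℝ)*(1-s)) / r) ((2:ℝ)^(-(s*((k:ℝ)-1)))) ≤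
      2 * r^(-s) * ((2:ℝ)^(-(min s (1-s))))^(((k - ⌈Real.logb 2 r⌉).toNat + (⌈Real.logb 2 r⌉ - k).toNat)) := by
  set ε := min s (1-s) with hεdef
  set k₀ := ⌈Real.logb 2 r⌉ with hk₀
  have hε0 : 0 < ε := lt_min hs0 (by linarith)
  have hεs : ε ≤ s := min_le_left _ _
  have hε1s : ε ≤ 1 - s := min_le_right _ _
  have hk0r : r ≤ (2:ℝ)^((k₀:ℝ)) := by
    rw [← Real.rpow_logb two_pos (by norm_num) hr]
    exact Real.rpow_le_rpow_of_exponent_le one_le_two (Int.le_ceil _)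
  have hk0r2 : (2:ℝ)^((k₀:ℝ)) ≤ 2*r := by
    have h := Int.ceil_lt_add_one (Real.logb 2 r)
    have h' : (k₀:ℝ) ≤ Real.logb 2 r + 1 := by exact_mod_cast h.le
    calc (2:ℝ)^((k₀:ℝ)) ≤ 2^(Real.logb 2 r + 1) :=
          Real.rpow_le_rpow_of_exponent_le one_le_two h'
      _ = 2 * r := by
          rw [Real.rpow_add two_pos, Real.rpow_logb two_pos (by norm_num) hr, Real.rpow_one]; ring
  have hpow : ∀ m : ℕ, ((2:ℝ)^(-ε))^m = (2:ℝ)^(-(ε * m)) := by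
    intro m
    rw [← Real.rpow_natCast ((2:ℝ)^(-ε)) m, ← Real.rpow_mul (by norm_num : (0:ℝ) ≤ 2)]
    ring_nf
  rcases le_or_gt k₀ k with hk | hk
  · have hm : (((k - k₀).toNat + (k₀ - k).toNat : ℕ) : ℝ) = (k:ℝ) - (k₀:ℝ) := by
      have h1 : (((k - k₀).toNat + (k₀ - k).toNat : ℕ) : ℤ) = k - k₀ := by omega
      exact_mod_cast congrArg (Int.cast : ℤ → ℝ) h1
    have hj : (0:ℝ) ≤ (k:ℝ) - (k₀:ℝ) := by
      have : (k₀:ℝ) ≤ (k:ℝ) := by exact_mod_cast hk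
      linarith
    refine (min_le_right _ _).trans ?_
    rw [hpow, hm]
    have hstep1 : (2:ℝ)^(-(s*((k:ℝ)-1))) ≤
        (2:ℝ)^(1 + (-s)*(k₀:ℝ) + (-(ε*((k:ℝ)-(k₀:ℝ))))) := by
      refine Real.rpow_le_rpow_of_exponent_le one_le_two ?_
      nlinarith [mul_nonneg (by linarith : (0:ℝ) ≤ s - ε) hj]
    refine hstep1.trans ?_
    have hsplit : (2:ℝ)^(1 + (-s)*(k₀:ℝ) + (-(ε*((k:ℝ)-(k₀:ℝ))))) =
        2 * (2:ℝ)^((-s)*(k₀:ℝ)) * (2:ℝ)^(-(ε*((k:ℝ)-(k₀:ℝ)))) := by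
      rw [Real.rpow_add two_pos, Real.rpow_add two_pos, Real.rpow_one]
    rw [hsplit]
    have hr2 : (2:ℝ)^((-s)*(k₀:ℝ)) ≤ r^(-s) := by
      have h1 : ((2:ℝ)^((k₀:ℝ)))^(-s) ≤ r^(-s) :=
        Real.rpow_le_rpow_of_nonpos hr hk0r (by linarith)
      rwa [← Real.rpow_mul (by norm_num : (0:ℝ) ≤ 2), mul_comm] at h1
    gcongr
  · have hm : (((k - k₀).toNat + (k₀ - k).toNat : ℕ) : ℝ) = (k₀:ℝ) - (k:ℝ) := by
      have h1 : (((k - k₀).toNat + (k₀ - k).toNat : ℕ) : ℤ) = k₀ - k := by omega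
      exact_mod_cast congrArg (Int.cast : ℤ → ℝ) h1
    have hj : (1:ℝ) ≤ (k₀:ℝ) - (k:ℝ) := by
      have : (k:ℝ) + 1 ≤ (k₀:ℝ) := by exact_mod_cast (by omega : k + 1 ≤ k₀)
      linarith
    refine (min_le_left _ _).trans ?_
    rw [hpow, hm, div_le_iff₀ hr]
    have hrs : r^(1-s) = r^(-s) * r := by
      rw [show (1:ℝ)-s = -s + 1 by ring, Real.rpow_add hr, Real.rpow_one]
    have hstep1 : (2:ℝ)^((k:ℝ)*(1-s)) ≤
        (2:ℝ)^(1 + ((k₀:ℝ)-1)*(1-s) + (-(ε*((k₀:ℝ)-(k:ℝ))))) := by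
      refine Real.rpow_le_rpow_of_exponent_le one_le_two ?_
      nlinarith [mul_nonneg (by linarith : (0:ℝ) ≤ 1 - s - ε) (by linarith : (0:ℝ) ≤ (k₀:ℝ) - (k:ℝ))]
    refine hstep1.trans ?_
    have hsplit : (2:ℝ)^(1 + ((k₀:ℝ)-1)*(1-s) + (-(ε*((k₀:ℝ)-(k:ℝ))))) =
        2 * (2:ℝ)^(((k₀:ℝ)-1)*(1-s)) * (2:ℝ)^(-(ε*((k₀:ℝ)-(k:ℝ)))) := by
      rw [Real.rpow_add two_pos, Real.rpow_add two_pos, Real.rpow_one]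
    rw [hsplit]
    have hrk : (2:ℝ)^(((k₀:ℝ)-1)*(1-s)) ≤ r^(1-s) := by
      have hb : (2:ℝ)^((k₀:ℝ)-1) ≤ r := by
        rw [Real.rpow_sub two_pos, Real.rpow_one, div_le_iff₀ (by norm_num : (0:ℝ) < 2)]
        linarith
      have h1 : ((2:ℝ)^((k₀:ℝ)-1))^(1-s) ≤ r^(1-s) :=
        Real.rpow_le_rpow (Real.rpow_pos_of_pos two_pos _).le hb (by linarith)
      rwa [← Real.rpow_mul (by norm_num : (0:ℝ) ≤ 2)] at h1
    calc 2 * (2:ℝ)^(((k₀:ℝ)-1)*(1-s)) * (2:ℝ)^(-(ε*((k₀:ℝ)-(k:ℝ))))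
        ≤ 2 * r^(1-s) * (2:ℝ)^(-(ε*((k₀:ℝ)-(k:ℝ)))) := by gcongr
      _ = 2 * r^(-s) * (2:ℝ)^(-(ε*((k₀:ℝ)-(k:ℝ)))) * r := by rw [hrs]; ring

lemma frac_key' (s r d : ℝ) (hs0 : 0 < s) (hs1 : s < 1) (hr : 0 < r) (k : ℤ)
    (hd1 : (2:ℝ)^(k-1) ≤ d) (hd2 : d < (2:ℝ)^k) :
    min (d/r) 1 ≤ d^s * min ((2:ℝ)^((k:ℝ)*(1-s)) / r) ((2:ℝ)^(-(s*((k:ℝ)-1)))) := by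
  have h2k1 : (0:ℝ) < (2:ℝ)^(k-1 : ℤ) := zpow_pos two_pos _
  have hd0 : 0 < d := lt_of_lt_of_le h2k1 hd1
  have hds : 0 < d^s := Real.rpow_pos_of_pos hd0 _
  have e1 : d/r ≤ d^s * ((2:ℝ)^((k:ℝ)*(1-s)) / r) := by
    rw [← mul_div_assoc]
    have hmain : d ≤ d^s * (2:ℝ)^((k:ℝ)*(1-s)) := by
      have hd' : d = d^s * d^(1-s) := by
        rw [← Real.rpow_add hd0]; norm_num
      have h2 : d^(1-s) ≤ (2:ℝ)^((k:ℝ)*(1-s)) := by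
        rw [Real.rpow_mul (by norm_num : (0:ℝ) ≤ 2)]
        refine Real.rpow_le_rpow hd0.le ?_ (by linarith)
        rw [Real.rpow_intCast]
        exact hd2.le
      calc d = d^s * d^(1-s) := hd'
        _ ≤ d^s * (2:ℝ)^((k:ℝ)*(1-s)) := by gcongr
    gcongr
  have e2 : (1:ℝ) ≤ d^s * (2:ℝ)^(-(s*((k:ℝ)-1))) := by
    have hb : (2:ℝ)^((k:ℝ)-1) ≤ d := by
      rw [show ((k:ℝ)-1) = (((k-1 : ℤ)):ℝ) by push_cast; ring, Real.rpow_intCast]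
      exact hd1
    have hbp : (0:ℝ) < (2:ℝ)^((k:ℝ)-1) := Real.rpow_pos_of_pos two_pos _
    have h1 : ((2:ℝ)^((k:ℝ)-1))^s ≤ d^s :=
      Real.rpow_le_rpow hbp.le hb hs0.le
    have h2 : (2:ℝ)^(-(s*((k:ℝ)-1))) = ((2:ℝ)^((k:ℝ)-1))^(-s) := by
      rw [← Real.rpow_mul (by norm_num : (0:ℝ) ≤ 2)]; ring_nf
    rw [h2]
    have h3 : ((2:ℝ)^((k:ℝ)-1))^s * ((2:ℝ)^((k:ℝ)-1))^(-s) = 1 := by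
      rw [← Real.rpow_add hbp]; norm_num
    calc (1:ℝ) = ((2:ℝ)^((k:ℝ)-1))^s * ((2:ℝ)^((k:ℝ)-1))^(-s) := h3.symm
      _ ≤ d^s * ((2:ℝ)^((k:ℝ)-1))^(-s) := by gcongr
  calc min (d/r) 1
      ≤ min (d^s * ((2:ℝ)^((k:ℝ)*(1-s)) / r)) (d^s * (2:ℝ)^(-(s*((k:ℝ)-1)))) :=
        min_le_min e1 e2
    _ = d^s * min ((2:ℝ)^((k:ℝ)*(1-s)) / r) ((2:ℝ)^(-(s*((k:ℝ)-1)))) :=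
        (mul_min_of_nonneg _ _ hds.le).symm

lemma lq_zero' (q : ℝ≥0∞) (hq0 : 0 < q) : lqNormE q (fun _ => (0:ℝ)) = 0 := by
  rcases eq_or_ne q ∞ with h | h
  · simp [lqNormE, h]
  · have hq' : 0 < q.toReal := ENNReal.toReal_pos hq0.ne' h
    rw [lqNormE, if_neg h]
    simp only [abs_zero, ENNReal.ofReal_zero]
    rw [ENNReal.zero_rpow_of_pos hq', tsum_zero, ENNReal.zero_rpow_of_pos (by positivity)]

lemma lq_const_bound' (q : ℝ≥0∞) (hq0 : 0 < q) {t M : ℝ} (ht0 : 0 ≤ t) (ht1 : t ≤ 1) (hM : 0 ≤ M)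
    (cc : ℤ → ℝ) (hc0 : ∀ k, 0 ≤ cc k) (k₀ : ℤ)
    (hcc : ∀ k, cc k ≤ M * t ^ ((k - k₀).toNat + (k₀ - k).toNat)) :
    lqNormE q cc ≤ ENNReal.ofReal M *
      (if q = ∞ then 1 else (2 * (1 - ENNReal.ofReal t ^ q.toReal)⁻¹) ^ (1/q.toReal)) := by
  split_ifs with h
  · rw [lqNormE, if_pos h, mul_one]
    refine iSup_le fun k => ?_
    rw [abs_of_nonneg (hc0 k)]
    refine ENNReal.ofReal_le_ofReal ((hcc k).trans ?_)
    calc M * t ^ ((k - k₀).toNat + (k₀ - k).toNat) ≤ M * 1 := by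
          gcongr
          exact pow_le_one₀ ht0 ht1
      _ = M := mul_one M
  · have hq' : 0 < q.toReal := ENNReal.toReal_pos hq0.ne' h
    rw [lqNormE, if_neg h]
    set τ : ℝ≥0∞ := ENNReal.ofReal t ^ q.toReal with hτdef
    have hτ1 : τ ≤ 1 := ENNReal.rpow_le_one (ENNReal.ofReal_le_one.2 ht1) hq'.le
    have key : ∀ k : ℤ, ENNReal.ofReal |cc k| ^ q.toReal ≤
        ENNReal.ofReal M ^ q.toReal * (τ ^ ((k - k₀).toNat) * τ ^ ((k₀ - k).toNat)) := by
      intro k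
      rw [abs_of_nonneg (hc0 k)]
      calc ENNReal.ofReal (cc k) ^ q.toReal
          ≤ ENNReal.ofReal (M * t ^ ((k - k₀).toNat + (k₀ - k).toNat)) ^ q.toReal := by
            gcongr
            exact hcc k
        _ = (ENNReal.ofReal M * ENNReal.ofReal t ^ ((k - k₀).toNat + (k₀ - k).toNat)) ^ q.toReal := by
            rw [ENNReal.ofReal_mul hM, ENNReal.ofReal_pow ht0]
        _ = ENNReal.ofReal M ^ q.toReal *
              ((ENNReal.ofReal t ^ ((k - k₀).toNat + (k₀ - k).toNat)) ^ q.toReal) :=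
            ENNReal.mul_rpow_of_nonneg _ _ hq'.le
        _ = ENNReal.ofReal M ^ q.toReal * (τ ^ ((k - k₀).toNat) * τ ^ ((k₀ - k).toNat)) := by
            congr 1
            rw [← ENNReal.rpow_natCast (ENNReal.ofReal t) ((k - k₀).toNat + (k₀ - k).toNat),
              ← ENNReal.rpow_mul, mul_comm, ENNReal.rpow_mul, ENNReal.rpow_natCast, hτdef, pow_add]
    calc (∑' k, ENNReal.ofReal |cc k| ^ q.toReal) ^ (1/q.toReal)
        ≤ (∑' k : ℤ, ENNReal.ofReal M ^ q.toReal *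
            (τ ^ ((k - k₀).toNat) * τ ^ ((k₀ - k).toNat))) ^ (1/q.toReal) :=
          ENNReal.rpow_le_rpow (ENNReal.tsum_le_tsum key) (by positivity)
      _ = (ENNReal.ofReal M ^ q.toReal *
            ∑' k : ℤ, τ ^ ((k - k₀).toNat) * τ ^ ((k₀ - k).toNat)) ^ (1/q.toReal) := by
          rw [ENNReal.tsum_mul_left]
      _ ≤ (ENNReal.ofReal M ^ q.toReal * (2 * (1 - τ)⁻¹)) ^ (1/q.toReal) := by
          refine ENNReal.rpow_le_rpow ?_ (by positivity)
          refine mul_le_mul_right ?_ _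
          have hshift := (Equiv.subRight k₀).tsum_eq
            (fun j : ℤ => τ ^ (j.toNat) * τ ^ ((-j).toNat))
          calc ∑' k : ℤ, τ ^ ((k - k₀).toNat) * τ ^ ((k₀ - k).toNat)
              = ∑' j : ℤ, τ ^ (j.toNat) * τ ^ ((-j).toNat) := by
                rw [← hshift]
                refine tsum_congr fun k => ?_
                have : (Equiv.subRight k₀) k = k - k₀ := rfl
                rw [this, neg_sub]
            _ ≤ 2 * (1 - τ)⁻¹ := zsum_geom' hτ1
      _ = ENNReal.ofReal M * (2 * (1 - τ)⁻¹) ^ (1/q.toReal) := by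
          rw [ENNReal.mul_rpow_of_nonneg _ _ (by positivity), one_div,
            ENNReal.rpow_rpow_inv hq'.ne']

end AuxCapacity

/-- `cap_{M^s_{p,q}}(B(x,r)) ≤ C₁ μ(B(x,r)) / r^{sp}` for `0 < r ≤ 1`. -/
theorem capacity_ball_le {X : Type*} [MetricSpace X] [MeasurableSpace X] [BorelSpace X]
    (μ : Measure X) (hd : IsDoubling μ)
    (s : ℝ) (p q : ℝ≥0∞) (hs0 : 0 < s) (hs1 : s < 1)
    (hp0 : 0 < p) (hpfin : p ≠ ∞) (hq0 : 0 < q) :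
    ∃ C₁ : ℝ≥0∞, 0 < C₁ ∧ C₁ < ∞ ∧ ∀ (x : X) (r : ℝ), 0 < r → r ≤ 1 →
      tlCapacity μ s p q (ball x r) ≤
        C₁ * (μ (ball x r) / ENNReal.ofReal (r ^ (s * p.toReal))) := by
  classical
  obtain ⟨hball, c, hc1, hcfin, hcd⟩ := hd
  set pt := p.toReal with hptdef
  have hpt : 0 < pt := ENNReal.toReal_pos hp0.ne' hpfin
  set ε := min s (1-s) with hεdef
  have hε0 : 0 < ε := lt_min hs0 (by linarith)
  set t : ℝ := (2:ℝ)^(-ε) with htdef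
  have ht0 : 0 < t := Real.rpow_pos_of_pos two_pos _
  have ht1 : t < 1 := Real.rpow_lt_one_of_one_lt_of_neg one_lt_two (by linarith)
  set K : ℝ≥0∞ :=
    (if q = ∞ then 1 else (2 * (1 - ENNReal.ofReal t ^ q.toReal)⁻¹) ^ (1/q.toReal)) with hKdef
  have hKfin : K < ∞ := by
    rw [hKdef]
    split_ifs with h
    · exact one_lt_top
    · have hq' : 0 < q.toReal := ENNReal.toReal_pos hq0.ne' h
      have hτ : ENNReal.ofReal t ^ q.toReal < 1 :=
        ENNReal.rpow_lt_one (ENNReal.ofReal_lt_one.2 ht1) hq'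
      have hinv : (1 - ENNReal.ofReal t ^ q.toReal)⁻¹ < ∞ :=
        ENNReal.inv_lt_top.2 (tsub_pos_of_lt hτ)
      exact ENNReal.rpow_lt_top_of_nonneg (by positivity)
        (ENNReal.mul_lt_top (by norm_num) hinv).ne
  have hAfin : (1 + 2*K) < ∞ := by
    refine ENNReal.add_lt_top.2 ⟨one_lt_top, ENNReal.mul_lt_top (by norm_num) hKfin⟩
  refine ⟨(1 + 2*K) ^ pt * c, ?_, ?_, ?_⟩
  · exact ENNReal.mul_pos (ENNReal.rpow_pos (zero_lt_one.trans_le le_self_add) hAfin.ne).ne'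
      (by intro h; rw [h] at hc1; exact (not_le.2 zero_lt_one) hc1)
  · exact ENNReal.mul_lt_top (ENNReal.rpow_lt_top_of_nonneg hpt.le hAfin.ne) hcfin
  intro x r hr0 hr1
  set D : ℝ≥0∞ := ENNReal.ofReal (r^(-s)) with hDdef
  have hD1 : (1:ℝ≥0∞) ≤ D := by
    rw [hDdef, ENNReal.one_le_ofReal]
    exact Real.one_le_rpow_of_pos_of_le_one_of_nonpos hr0 hr1 (by linarith)
  have hμ2fin : μ (ball x (2*r)) < ∞ := (hball x (2*r) (by linarith)).2
  -- the test function
  set u : X → ℝ := fun y => max 0 (min 1 (2 - dist x y / r)) with hudef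
  have hu0 : ∀ y, 0 ≤ u y := fun y => le_max_left _ _
  have hu1 : ∀ y, u y ≤ 1 := fun y => max_le (by norm_num) (min_le_left _ _)
  have huLip : ∀ y z, |u y - u z| ≤ dist y z / r := by
    intro y z
    refine (clamp_abs_le' _ _).trans ?_
    have : (2 - dist x y / r) - (2 - dist x z / r) = (dist x z - dist x y)/r := by ring
    rw [this, abs_div, abs_of_pos hr0, dist_comm y z]
    gcongr
    simpa [dist_comm] using abs_dist_sub_le z y x
  have huout : ∀ y, y ∉ ball x (2*r) → u y = 0 := by
    intro y hy
    have hdy : 2*r ≤ dist x y := by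
      rw [mem_ball, dist_comm] at hy
      linarith [not_lt.1 hy]
    have : 2 - dist x y / r ≤ 0 := by
      rw [sub_nonpos, le_div_iff₀ hr0]
      linarith
    rw [hudef]
    simp only
    rw [max_eq_left ((min_le_right _ _).trans this)]
  have huone : ∀ y ∈ ball x r, u y = 1 := by
    intro y hy
    rw [mem_ball, dist_comm] at hy
    have h1 : (1:ℝ) ≤ 2 - dist x y / r := by
      have : dist x y / r < 1 := (div_lt_one hr0).2 hy
      linarith
    rw [hudef]
    simp only
    rw [min_eq_left h1, max_eq_right zero_le_one]
  have hucont : Continuous u := by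
    apply Continuous.max continuous_const
    apply Continuous.min continuous_const
    exact continuous_const.sub ((continuous_const.dist continuous_id).div_const r)
  -- the fractional gradient
  set ck : ℤ → ℝ := fun k =>
    min ((2:ℝ)^((k:ℝ)*(1-s)) / r) ((2:ℝ)^(-(s*((k:ℝ)-1)))) with hckdef
  have hck0 : ∀ k, 0 ≤ ck k :=
    fun k => le_min (by positivity) (Real.rpow_pos_of_pos two_pos _).le
  set g : ℤ → X → ℝ := fun k => (ball x (2*r)).indicator (fun _ => ck k) with hgdef
  have hg0 : ∀ k y, 0 ≤ g k y := fun k y => Set.indicator_nonneg (fun _ _ => hck0 k) y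
  have hgval : ∀ k y, y ∈ ball x (2*r) → g k y = ck k := by
    intro k y hy; rw [hgdef]; simp only; rw [Set.indicator_of_mem hy]
  have hgval' : ∀ k y, y ∉ ball x (2*r) → g k y = 0 := by
    intro k y hy; rw [hgdef]; simp only; rw [Set.indicator_of_notMem hy]
  have hkey : ∀ (k : ℤ) (y z : X), (2:ℝ) ^ (k - 1) ≤ dist y z → dist y z < (2:ℝ) ^ k →
      |u y - u z| ≤ dist y z ^ s * ck k := by
    intro k y z h1 h2
    have habs : |u y - u z| ≤ min (dist y z / r) 1 := by
      refine le_min (huLip y z) (abs_sub_le_iff.2 ⟨?_, ?_⟩)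
      · linarith [hu1 y, hu0 z]
      · linarith [hu1 z, hu0 y]
    exact habs.trans (frac_key' s r (dist y z) hs0 hs1 hr0 k h1 h2)
  have hgrad : IsFracGradient μ s u univ g := by
    refine ⟨fun k => measurable_const.indicator measurableSet_ball, hg0,
      ∅, empty_subset _, measure_empty, ?_⟩
    intro k y _ z _ h1 h2
    by_cases hy2 : y ∈ ball x (2*r)
    · have : ck k ≤ g k y + g k z := by
        rw [hgval k y hy2]
        exact le_add_of_nonneg_right (hg0 k z)
      refine (hkey k y z h1 h2).trans ?_
      gcongr
    · by_cases hz2 : z ∈ ball x (2*r)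
      · have : ck k ≤ g k y + g k z := by
          rw [hgval k z hz2]
          exact le_add_of_nonneg_left (hg0 k y)
        refine (hkey k y z h1 h2).trans ?_
        gcongr
      · rw [huout y hy2, huout z hz2, sub_zero, abs_zero]
        exact mul_nonneg (Real.rpow_nonneg dist_nonneg s)
          (add_nonneg (hg0 k y) (hg0 k z))
  -- bound on the ℓ^q norm of the gradient constants
  have hLb : lqNormE q ck ≤ 2 * D * K := by
    have h := lq_const_bound' q hq0 ht0.le ht1.le
      (by positivity : (0:ℝ) ≤ 2 * r^(-s)) ck hck0 ⌈Real.logb 2 r⌉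
      (fun k => ck_bound' s r hs0 hs1 hr0 k)
    refine h.trans (le_of_eq ?_)
    rw [← hKdef, ENNReal.ofReal_mul (by norm_num), hDdef]
    norm_num
  -- bound on eLpNorm of u
  have hele : eLpNorm u p μ ≤ μ (ball x (2*r)) ^ (1/pt) := by
    have hb : ∀ y, ‖u y‖ ≤ ((ball x (2*r)).indicator (fun _ => (1:ℝ)) y) := by
      intro y
      by_cases hy : y ∈ ball x (2*r)
      · rw [Set.indicator_of_mem hy, Real.norm_eq_abs, abs_of_nonneg (hu0 y)]
        exact hu1 y
      · rw [Set.indicator_of_notMem hy, huout y hy, norm_zero]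
    refine (eLpNorm_mono_real hb).trans ?_
    rw [eLpNorm_indicator_const measurableSet_ball hp0.ne' hpfin]
    simp [hptdef]
  -- bound on the L^p(ℓ^q) norm of g
  have hlp : lpLqNorm μ p q g ≤ (2 * D * K) * μ (ball x (2*r)) ^ (1/pt) := by
    rw [lpLqNorm, if_neg hpfin]
    have hpoint : ∀ y, (lqNormE q fun k => g k y) ^ pt ≤
        (ball x (2*r)).indicator (fun _ => (2 * D * K)^pt) y := by
      intro y
      by_cases hy : y ∈ ball x (2*r)
      · rw [Set.indicator_of_mem hy]
        have hfg : (fun k => g k y) = ck := by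
          funext k; exact hgval k y hy
        rw [hfg]
        exact ENNReal.rpow_le_rpow hLb hpt.le
      · rw [Set.indicator_of_notMem hy]
        have hfg : (fun k => g k y) = fun _ => (0:ℝ) := by
          funext k; exact hgval' k y hy
        rw [hfg, lq_zero' q hq0, ENNReal.zero_rpow_of_pos hpt]
    calc (∫⁻ y, (lqNormE q fun k => g k y) ^ pt ∂μ) ^ (1/pt)
        ≤ (∫⁻ y, (ball x (2*r)).indicator (fun _ => (2 * D * K)^pt) y ∂μ) ^ (1/pt) :=
          ENNReal.rpow_le_rpow (lintegral_mono hpoint) (by positivity)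
      _ = ((2 * D * K)^pt * μ (ball x (2*r))) ^ (1/pt) := by
          rw [lintegral_indicator measurableSet_ball, setLIntegral_const]
      _ = (2 * D * K) * μ (ball x (2*r)) ^ (1/pt) := by
          rw [ENNReal.mul_rpow_of_nonneg _ _ (by positivity), one_div,
            ENNReal.rpow_rpow_inv hpt.ne']
  -- bound on the Triebel–Lizorkin norm
  have hT : tlNorm μ s p q univ u ≤ (1 + 2*K) * (D * μ (ball x (2*r)) ^ (1/pt)) := by
    rw [tlNorm, Measure.restrict_univ]
    have h2 : (⨅ (g' : ℤ → X → ℝ) (_ : IsFracGradient μ s u univ g'), lpLqNorm μ p q g')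
        ≤ lpLqNorm μ p q g := (iInf_le _ g).trans (iInf_le _ hgrad)
    calc eLpNorm u p μ + ⨅ (g' : ℤ → X → ℝ) (_ : IsFracGradient μ s u univ g'),
          lpLqNorm μ p q g'
        ≤ μ (ball x (2*r)) ^ (1/pt) + (2 * D * K) * μ (ball x (2*r)) ^ (1/pt) :=
          add_le_add hele (h2.trans hlp)
      _ ≤ D * μ (ball x (2*r)) ^ (1/pt) + (2 * D * K) * μ (ball x (2*r)) ^ (1/pt) := by
          gcongr
          exact le_mul_of_one_le_left zero_le hD1
      _ = (1 + 2*K) * (D * μ (ball x (2*r)) ^ (1/pt)) := by ring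
  have hTfin : tlNorm μ s p q univ u < ∞ := by
    refine lt_of_le_of_lt hT (ENNReal.mul_lt_top hAfin ?_)
    exact ENNReal.mul_lt_top ENNReal.ofReal_lt_top
      (ENNReal.rpow_lt_top_of_nonneg (by positivity) hμ2fin.ne)
  have hmem : MemTL μ s p q univ u := by
    constructor
    · rw [Measure.restrict_univ]
      exact ⟨hucont.aestronglyMeasurable,
        lt_of_le_of_lt hele (ENNReal.rpow_lt_top_of_nonneg (by positivity) hμ2fin.ne)⟩
    · exact hTfin
  -- capacity estimate
  have hcap : tlCapacity μ s p q (ball x r) ≤ (tlNorm μ s p q univ u) ^ pt := by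
    refine (iInf_le _ u).trans ((iInf_le _ hmem).trans (iInf_le _ ?_))
    exact ⟨ball x r, isOpen_ball, subset_rfl, fun y hy => (huone y hy).ge⟩
  refine hcap.trans ?_
  have hDpt : D ^ pt = (ENNReal.ofReal (r^(s*pt)))⁻¹ := by
    rw [hDdef, ENNReal.ofReal_rpow_of_pos (Real.rpow_pos_of_pos hr0 _),
      ← Real.rpow_mul hr0.le, show (-s)*pt = -(s*pt) by ring,
      Real.rpow_neg hr0.le, ENNReal.ofReal_inv_of_pos (Real.rpow_pos_of_pos hr0 _)]
  have hμ2 : μ (ball x (2*r)) ≤ c * μ (ball x r) := hcd x r hr0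
  calc (tlNorm μ s p q univ u) ^ pt
      ≤ ((1 + 2*K) * (D * μ (ball x (2*r)) ^ (1/pt))) ^ pt :=
        ENNReal.rpow_le_rpow hT hpt.le
    _ = (1 + 2*K) ^ pt * (D ^ pt * μ (ball x (2*r))) := by
        rw [ENNReal.mul_rpow_of_nonneg _ _ hpt.le, ENNReal.mul_rpow_of_nonneg _ _ hpt.le,
          one_div, ENNReal.rpow_inv_rpow hpt.ne']
    _ ≤ (1 + 2*K) ^ pt * (D ^ pt * (c * μ (ball x r))) := by gcongr
    _ = (1 + 2*K) ^ pt * c * (μ (ball x r) / ENNReal.ofReal (r ^ (s * pt))) := by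
        rw [hDpt, div_eq_mul_inv]; ring
end

section
/- Let (X,d,μ) be a doubling metric measure space, 0<s<1, 0<p<∞ and 0<q≤∞. Then for any E⊂X there exists a constant C such that cap_{M^s_{p,q}}(E)^θ ≤ C·ℋ^h(E), where θ = min{1, q/p} and the gauge is h(B(x,ρ)) = (μ(B(x,ρ))/ρ^{sp})^θ; that is, ℋ^h(E) is computed using coverings by balls B(x_i,r_i) with r_i ≤ δ and weight (μ(B(x_i,r_i))/r_i^{sp})^θ attached to each ball. -/
open MeasureTheory Metric Set Filter ENNReal

noncomputable def mkr (s : ℝ) (k : ℤ) (r : ℝ) : ℝ :=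
  min (((2:ℝ)^(1-k))^s) (((2:ℝ)^k)^(1-s) / r)

lemma mkr_nonneg {s r : ℝ} (k : ℤ) (hr : 0 < r) : 0 ≤ mkr s k r := by
  apply le_min
  · exact Real.rpow_nonneg (zpow_pos (by norm_num : (0:ℝ)<2) _).le _
  · exact div_nonneg (Real.rpow_nonneg (zpow_pos (by norm_num : (0:ℝ)<2) _).le _) hr.le

lemma mkr_le_left {s r : ℝ} (k : ℤ) : mkr s k r ≤ ((2:ℝ)^(1-k))^s := min_le_left _ _

lemma min_le_rpow_mul_mkr {s r d : ℝ} {k : ℤ} (hs0 : 0 < s) (hs1 : s < 1) (hr : 0 < r)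
    (hd1 : (2:ℝ)^(k-1) ≤ d) (hd2 : d < (2:ℝ)^k) :
    min 1 (d / r) ≤ d ^ s * mkr s k r := by
  have hd0 : 0 < d := lt_of_lt_of_le (zpow_pos (by norm_num : (0:ℝ)<2) _) hd1
  have h2 : (0:ℝ) < 2 := by norm_num
  have hA : 1 ≤ d ^ s * ((2:ℝ)^(1-k))^s := by
    rw [← Real.mul_rpow hd0.le (zpow_pos h2 _).le]
    refine Real.one_le_rpow ?_ hs0.le
    calc (1:ℝ) = (2:ℝ)^(k-1) * (2:ℝ)^(1-k) := by
          rw [← zpow_add₀ (by norm_num : (2:ℝ)≠0)]; norm_num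
      _ ≤ d * (2:ℝ)^(1-k) := by
          exact mul_le_mul_of_nonneg_right hd1 (zpow_pos h2 _).le
  have hB : d / r ≤ d ^ s * (((2:ℝ)^k)^(1-s) / r) := by
    rw [← mul_div_assoc]
    apply div_le_div_of_nonneg_right ?_ hr.le
    calc d = d ^ s * d ^ (1-s) := by
          rw [← Real.rpow_add hd0]; norm_num
      _ ≤ d ^ s * ((2:ℝ)^k)^(1-s) := by
          refine mul_le_mul_of_nonneg_left ?_ (Real.rpow_nonneg hd0.le _)
          exact Real.rpow_le_rpow hd0.le hd2.le (by linarith)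
  calc min 1 (d/r) ≤ min (d ^ s * ((2:ℝ)^(1-k))^s) (d ^ s * (((2:ℝ)^k)^(1-s) / r)) :=
        min_le_min hA hB
    _ = d ^ s * mkr s k r := by
        rw [mkr, mul_min_of_nonneg _ _ (Real.rpow_nonneg hd0.le _)]  -- name guess

lemma abs_psi_sub_psi {a b : ℝ} : |min 1 (max 0 a) - min 1 (max 0 b)| ≤ |a - b| := by
  calc |min 1 (max 0 a) - min 1 (max 0 b)| ≤ max |1 - 1| |max 0 a - max 0 b| :=
        abs_min_sub_min_le_max _ _ _ _
    _ ≤ |a - b| := by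
        rw [sub_self, abs_zero]
        refine max_le (abs_nonneg _) ?_
        rw [max_comm 0 a, max_comm 0 b]
        exact abs_max_sub_max_le_abs _ _ _

/-- ℓ^w dominates ℓ^t for w ≤ t (ENNReal version). -/
lemma lq_norm_mono {ι : Type*} (v : ι → ℝ≥0∞) {w t : ℝ} (hw : 0 < w) (hwt : w ≤ t) :
    (∑' k, v k ^ t) ^ (1/t) ≤ (∑' k, v k ^ w) ^ (1/w) := by
  have ht : 0 < t := hw.trans_le hwt
  set S := ∑' k, v k ^ w with hS
  by_cases hStop : S = ∞
  · rw [hStop, ENNReal.top_rpow_of_pos (by positivity : (0:ℝ) < 1/w)]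
    exact le_top
  by_cases hS0 : S = 0
  · have hv : ∀ k, v k = 0 := by
      intro k
      have h1 : v k ^ w ≤ S := ENNReal.le_tsum k
      rw [hS0, le_zero_iff] at h1
      simpa [ENNReal.rpow_eq_zero_iff, hw, hw.not_gt] using h1
    have : (∑' k, v k ^ t) = 0 := by simp [hv, ENNReal.zero_rpow_of_pos ht]
    rw [this, ENNReal.zero_rpow_of_pos (by positivity : (0:ℝ) < 1/t)]
    exact zero_le
  have key : ∑' k, v k ^ t ≤ S ^ (t/w) := by
    have hterm : ∀ k, v k ^ t ≤ S ^ ((t-w)/w) * v k ^ w := by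
      intro k
      by_cases hv0 : v k = 0
      · simp [hv0, ENNReal.zero_rpow_of_pos ht]
      have hvt : v k ≠ ∞ := by
        intro h
        apply hStop
        have : v k ^ w = ∞ := by simp [h, ENNReal.top_rpow_of_pos hw]
        exact eq_top_iff.2 (this ▸ ENNReal.le_tsum k)
      have h1 : v k ^ t = v k ^ (t-w) * v k ^ w := by
        rw [← ENNReal.rpow_add _ _ hv0 hvt]; ring_nf
      rw [h1]
      refine mul_le_mul_left ?_ _
      have h2 : v k ^ (t-w) = (v k ^ w) ^ ((t-w)/w) := by
        rw [← ENNReal.rpow_mul]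
        congr 1
        field_simp
      rw [h2]
      exact ENNReal.rpow_le_rpow (ENNReal.le_tsum k) (div_nonneg (by linarith) hw.le)
    calc ∑' k, v k ^ t ≤ ∑' k, S ^ ((t-w)/w) * v k ^ w := ENNReal.tsum_le_tsum hterm
      _ = S ^ ((t-w)/w) * S := ENNReal.tsum_mul_left
      _ = S ^ (t/w) := by
          have h3 : S ^ ((t-w)/w) * S ^ (1:ℝ) = S ^ ((t-w)/w + 1) :=
            (ENNReal.rpow_add _ _ hS0 hStop).symm
          rw [ENNReal.rpow_one] at h3
          rw [h3]
          congr 1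
          field_simp
          ring
  calc (∑' k, v k ^ t) ^ (1/t) ≤ (S ^ (t/w)) ^ (1/t) :=
        ENNReal.rpow_le_rpow key (by positivity)
    _ = S ^ (1/w) := by
        rw [← ENNReal.rpow_mul]
        congr 1
        field_simp

lemma iSup_le_lw {ι : Type*} [Nonempty ι] (v : ι → ℝ≥0∞) {w : ℝ} (hw : 0 < w) :
    (⨆ k, v k) ≤ (∑' k, v k ^ w) ^ (1/w) := by
  refine iSup_le fun k => ?_
  have : v k = (v k ^ w) ^ (1/w) := by
    rw [← ENNReal.rpow_mul, mul_one_div, div_self hw.ne', ENNReal.rpow_one]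
  rw [this]
  exact ENNReal.rpow_le_rpow (ENNReal.le_tsum k) (by positivity)

lemma tsum_le_tsum_rpow {ι : Type*} (v : ι → ℝ≥0∞) {θ : ℝ} (hθ0 : 0 < θ) (hθ1 : θ ≤ 1) :
    (∑' k, v k) ≤ (∑' k, v k ^ θ) ^ (1/θ) := by
  have := lq_norm_mono v hθ0 hθ1
  simpa [ENNReal.rpow_one] using this

lemma rpow_tsum_le_tsum_rpow {ι : Type*} (v : ι → ℝ≥0∞) {θ : ℝ} (hθ0 : 0 < θ) (hθ1 : θ ≤ 1) :
    (∑' k, v k) ^ θ ≤ ∑' k, v k ^ θ := by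
  calc (∑' k, v k) ^ θ ≤ ((∑' k, v k ^ θ) ^ (1/θ)) ^ θ :=
        ENNReal.rpow_le_rpow (tsum_le_tsum_rpow v hθ0 hθ1) hθ0.le
    _ = ∑' k, v k ^ θ := by
        rw [← ENNReal.rpow_mul, one_div, inv_mul_cancel₀ hθ0.ne', ENNReal.rpow_one]

lemma minkowski_finset {X : Type*} [MeasurableSpace X] (μ : Measure X)
    (F : ℕ → X → ℝ≥0∞) (hF : ∀ i, Measurable (F i)) {t : ℝ} (ht : 1 ≤ t) (n : ℕ) :
    (∫⁻ x, (∑ i ∈ Finset.range n, F i x) ^ t ∂μ) ^ (1/t) ≤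
      ∑ i ∈ Finset.range n, (∫⁻ x, F i x ^ t ∂μ) ^ (1/t) := by
  induction n with
  | zero =>
    have ht0 : (0:ℝ) < t := lt_of_lt_of_le one_pos ht
    simp [ht0, ENNReal.zero_rpow_of_pos (lt_of_lt_of_le one_pos ht),
      ENNReal.zero_rpow_of_pos (by positivity : (0:ℝ) < 1/t)]
  | succ n ih =>
    have hsum : Measurable (fun x => ∑ i ∈ Finset.range n, F i x) :=
      Finset.measurable_sum _ (fun i _ => hF i)
    calc (∫⁻ x, (∑ i ∈ Finset.range (n+1), F i x) ^ t ∂μ) ^ (1/t)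
        = (∫⁻ x, ((fun x => ∑ i ∈ Finset.range n, F i x) + F n) x ^ t ∂μ) ^ (1/t) := by
          congr 1
          refine lintegral_congr fun x => ?_
          simp [Finset.sum_range_succ]
      _ ≤ (∫⁻ x, (∑ i ∈ Finset.range n, F i x) ^ t ∂μ) ^ (1/t) + (∫⁻ x, F n x ^ t ∂μ) ^ (1/t) :=
          ENNReal.lintegral_Lp_add_le hsum.aemeasurable (hF n).aemeasurable ht
      _ ≤ ∑ i ∈ Finset.range (n+1), (∫⁻ x, F i x ^ t ∂μ) ^ (1/t) := by
          rw [Finset.sum_range_succ]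
          exact add_le_add_left ih _

lemma minkowski_tsum {X : Type*} [MeasurableSpace X] (μ : Measure X)
    (F : ℕ → X → ℝ≥0∞) (hF : ∀ i, Measurable (F i)) {t : ℝ} (ht : 1 ≤ t) :
    (∫⁻ x, (∑' i, F i x) ^ t ∂μ) ^ (1/t) ≤ ∑' i, (∫⁻ x, F i x ^ t ∂μ) ^ (1/t) := by
  have ht0 : (0:ℝ) < t := lt_of_lt_of_le one_pos ht
  have hiso := ENNReal.orderIsoRpow t ht0
  have key : (∫⁻ x, (∑' i, F i x) ^ t ∂μ) =
      ⨆ n, ∫⁻ x, (∑ i ∈ Finset.range n, F i x) ^ t ∂μ := by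
    rw [← lintegral_iSup (fun n => (Finset.measurable_sum _ fun i _ => hF i).pow_const t)
      (fun a b hab x => ENNReal.rpow_le_rpow
        (Finset.sum_le_sum_of_subset (Finset.range_subset_range.2 hab)) ht0.le)]
    refine lintegral_congr fun x => ?_
    rw [ENNReal.tsum_eq_iSup_nat]
    exact ((ENNReal.orderIsoRpow t ht0).map_iSup _)
  rw [key]
  have : (⨆ n, ∫⁻ x, (∑ i ∈ Finset.range n, F i x) ^ t ∂μ) ^ (1/t) =
      ⨆ n, (∫⁻ x, (∑ i ∈ Finset.range n, F i x) ^ t ∂μ) ^ (1/t) :=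
    (ENNReal.orderIsoRpow (1/t) (by positivity)).map_iSup _
  rw [this]
  refine iSup_le fun n => (minkowski_finset μ F hF ht n).trans ?_
  exact ENNReal.sum_le_tsum _

noncomputable def Cg (s w : ℝ) : ℝ≥0∞ :=
  ENNReal.ofReal ((2:ℝ) ^ s) ^ w * (1 - ENNReal.ofReal (((2:ℝ)⁻¹) ^ s) ^ w)⁻¹
  + (1 - ENNReal.ofReal (((2:ℝ)⁻¹) ^ (1-s)) ^ w)⁻¹

lemma rho_lt_one {a w : ℝ} (ha : 0 < a) (hw : 0 < w) :
    ENNReal.ofReal (((2:ℝ)⁻¹) ^ a) ^ w < 1 := by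
  have h1 : ((2:ℝ)⁻¹) ^ a < 1 :=
    Real.rpow_lt_one (by norm_num) (by norm_num) ha
  have h2 : ENNReal.ofReal (((2:ℝ)⁻¹) ^ a) < 1 := by
    rw [show (1:ℝ≥0∞) = ENNReal.ofReal 1 by simp]
    exact ENNReal.ofReal_lt_ofReal_iff_of_nonneg (by positivity) |>.2 h1
  exact ENNReal.rpow_lt_one h2 hw

lemma Cg_lt_top {s w : ℝ} (hs0 : 0 < s) (hs1 : s < 1) (hw : 0 < w) : Cg s w < ∞ := by
  have h1 := rho_lt_one hs0 hw
  have h2 := rho_lt_one (by linarith : (0:ℝ) < 1 - s) hw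
  have i1 : (1 - ENNReal.ofReal (((2:ℝ)⁻¹) ^ s) ^ w)⁻¹ < ∞ :=
    ENNReal.inv_lt_top.2 (tsub_pos_iff_lt.2 h1)
  have i2 : (1 - ENNReal.ofReal (((2:ℝ)⁻¹) ^ (1-s)) ^ w)⁻¹ < ∞ :=
    ENNReal.inv_lt_top.2 (tsub_pos_iff_lt.2 h2)
  have f1 : ENNReal.ofReal ((2:ℝ) ^ s) ^ w < ∞ :=
    ENNReal.rpow_lt_top_of_nonneg hw.le ENNReal.ofReal_ne_top
  exact ENNReal.add_lt_top.2 ⟨ENNReal.mul_lt_top f1 i1, i2⟩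

lemma Cg_pos {s w : ℝ} : 0 < Cg s w := by
  have : (0:ℝ≥0∞) < (1 - ENNReal.ofReal (((2:ℝ)⁻¹) ^ (1-s)) ^ w)⁻¹ :=
    ENNReal.inv_pos.2 (ne_top_of_le_ne_top ENNReal.one_ne_top tsub_le_self)
  calc (0:ℝ≥0∞) < _ := this
    _ ≤ Cg s w := le_add_self

lemma tsum_shift_upper (k₀ : ℤ) (f : ℤ → ℝ≥0∞) :
    ∑' k : ℤ, (if k₀+1 ≤ k then f k else 0) = ∑' n : ℕ, f (k₀+1+n) := by
  have hinj : Function.Injective (fun n : ℕ => k₀+1+(n:ℤ)) := by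
    intro a b hab; simpa using hab
  have hsupp : Function.support (fun k : ℤ => if k₀+1 ≤ k then f k else 0) ⊆
      Set.range (fun n : ℕ => k₀+1+(n:ℤ)) := by
    intro k hk
    rw [Function.mem_support] at hk
    by_cases h : k₀+1 ≤ k
    · exact ⟨(k - (k₀+1)).toNat, by simp; omega⟩
    · simp [h] at hk
  have h := hinj.tsum_eq hsupp
  rw [← h]
  congr 1; funext n
  rw [if_pos (by omega : k₀+1 ≤ k₀+1+(n:ℤ))]

lemma tsum_shift_lower (k₀ : ℤ) (f : ℤ → ℝ≥0∞) :
    ∑' k : ℤ, (if k ≤ k₀ then f k else 0) = ∑' n : ℕ, f (k₀-n) := by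
  have hinj : Function.Injective (fun n : ℕ => k₀-(n:ℤ)) := by
    intro a b hab; simp at hab; omega
  have hsupp : Function.support (fun k : ℤ => if k ≤ k₀ then f k else 0) ⊆
      Set.range (fun n : ℕ => k₀-(n:ℤ)) := by
    intro k hk
    rw [Function.mem_support] at hk
    by_cases h : k ≤ k₀
    · exact ⟨(k₀ - k).toNat, by simp; omega⟩
    · simp [h] at hk
  have h := hinj.tsum_eq hsupp
  rw [← h]
  congr 1; funext n
  rw [if_pos (by omega : k₀-(n:ℤ) ≤ k₀)]

lemma pow_rpow_comm {x : ℝ} (hx : 0 ≤ x) (n : ℕ) (s : ℝ) : (x^n)^s = (x^s)^n := by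
  rw [← Real.rpow_natCast x n, ← Real.rpow_natCast (x^s) n, ← Real.rpow_mul hx,
    ← Real.rpow_mul hx, mul_comm]

lemma ofReal_mul_pow_rpow {A B w : ℝ} (hA : 0 ≤ A) (hB : 0 ≤ B) (hw : 0 ≤ w) (n : ℕ) :
    ENNReal.ofReal (A * B^n) ^ w = ENNReal.ofReal A ^ w * (ENNReal.ofReal B ^ w)^n := by
  rw [ENNReal.ofReal_mul hA, ENNReal.ofReal_pow hB,
    ENNReal.mul_rpow_of_nonneg _ _ hw,
    ← ENNReal.rpow_natCast (ENNReal.ofReal B) n, ← ENNReal.rpow_mul,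
    ← ENNReal.rpow_natCast (ENNReal.ofReal B ^ w) n, ← ENNReal.rpow_mul]
  rw [mul_comm w (n:ℝ), mul_comm]

lemma geom_bound {s w r : ℝ} (hs0 : 0 < s) (hs1 : s < 1) (hw : 0 < w) (hr : 0 < r) :
    ∑' k : ℤ, ENNReal.ofReal (mkr s k r) ^ w ≤ Cg s w * ENNReal.ofReal r ^ (-(s*w)) := by
  set k₀ := Int.log 2 r with hk₀
  have hk₀1 : (2:ℝ)^k₀ ≤ r := Int.zpow_log_le_self (by norm_num) hr
  have hk₀2 : r < (2:ℝ)^(k₀+1) := Int.lt_zpow_succ_log_self (by norm_num) r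
  have h2pos : ∀ m : ℤ, (0:ℝ) < (2:ℝ)^m := fun m => zpow_pos (by norm_num) m
  -- pointwise bound
  have hpt : ∀ k : ℤ, ENNReal.ofReal (mkr s k r) ^ w ≤
      (if k₀+1 ≤ k then ENNReal.ofReal (((2:ℝ)^(1-k))^s) ^ w else 0)
      + (if k ≤ k₀ then ENNReal.ofReal (((2:ℝ)^k)^(1-s)/r) ^ w else 0) := by
    intro k
    rcases le_or_gt (k₀+1) k with h|h
    · refine le_add_right ?_
      rw [if_pos h]
      exact ENNReal.rpow_le_rpow (ENNReal.ofReal_le_ofReal (min_le_left _ _)) hw.le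
    · refine le_add_left ?_
      rw [if_pos (by omega : k ≤ k₀)]
      exact ENNReal.rpow_le_rpow (ENNReal.ofReal_le_ofReal (min_le_right _ _)) hw.le
  calc ∑' k : ℤ, ENNReal.ofReal (mkr s k r) ^ w
      ≤ ∑' k : ℤ, ((if k₀+1 ≤ k then ENNReal.ofReal (((2:ℝ)^(1-k))^s) ^ w else 0)
        + (if k ≤ k₀ then ENNReal.ofReal (((2:ℝ)^k)^(1-s)/r) ^ w else 0)) :=
        ENNReal.tsum_le_tsum hpt
    _ = (∑' n : ℕ, ENNReal.ofReal (((2:ℝ)^(1-(k₀+1+(n:ℤ))))^s) ^ w)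
        + (∑' n : ℕ, ENNReal.ofReal (((2:ℝ)^(k₀-(n:ℤ)))^(1-s)/r) ^ w) := by
        rw [ENNReal.tsum_add, tsum_shift_upper k₀ (fun k => ENNReal.ofReal (((2:ℝ)^(1-k))^s) ^ w),
          tsum_shift_lower k₀ (fun k => ENNReal.ofReal (((2:ℝ)^k)^(1-s)/r) ^ w)]
    _ ≤ Cg s w * ENNReal.ofReal r ^ (-(s*w)) := by
        have h2ne : (2:ℝ) ≠ 0 := by norm_num
        set R := ENNReal.ofReal r ^ (-(s*w)) with hR
        have hofr : ENNReal.ofReal (r^(-s)) ^ w = R := by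
          rw [← ENNReal.ofReal_rpow_of_pos hr, ← ENNReal.rpow_mul, hR]
          ring_nf
        -- sum 1
        have e1 : ∀ n : ℕ, (2:ℝ)^((1:ℤ)-(k₀+1+(n:ℤ))) = (2:ℝ)^(-k₀) * ((2:ℝ)⁻¹)^n := by
          intro n
          rw [show (1:ℤ)-(k₀+1+(n:ℤ)) = -k₀ - (n:ℤ) by ring, zpow_sub₀ h2ne,
            zpow_natCast, div_eq_mul_inv, ← inv_pow]
        have t1 : ∀ n : ℕ, ENNReal.ofReal (((2:ℝ)^((1:ℤ)-(k₀+1+(n:ℤ))))^s) ^ w =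
            ENNReal.ofReal (((2:ℝ)^(-k₀))^s) ^ w * (ENNReal.ofReal (((2:ℝ)⁻¹)^s) ^ w)^n := by
          intro n
          rw [e1 n, Real.mul_rpow (h2pos _).le (by positivity), pow_rpow_comm (by norm_num) n s,
            ofReal_mul_pow_rpow (Real.rpow_nonneg (h2pos _).le _) (Real.rpow_nonneg (by norm_num) _) hw.le]
        have s1 : (∑' n : ℕ, ENNReal.ofReal (((2:ℝ)^(1-(k₀+1+(n:ℤ))))^s) ^ w) =
            ENNReal.ofReal (((2:ℝ)^(-k₀))^s) ^ w * (1 - ENNReal.ofReal (((2:ℝ)⁻¹)^s) ^ w)⁻¹ := by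
          rw [← ENNReal.tsum_geometric, ← ENNReal.tsum_mul_left]
          exact tsum_congr t1
        have head1 : ENNReal.ofReal (((2:ℝ)^(-k₀))^s) ^ w ≤ ENNReal.ofReal ((2:ℝ)^s) ^ w * R := by
          have hb : (2:ℝ)^(-k₀) ≤ 2/r := by
            rw [le_div_iff₀ hr]
            calc (2:ℝ)^(-k₀) * r ≤ (2:ℝ)^(-k₀) * (2:ℝ)^(k₀+1) :=
                  mul_le_mul_of_nonneg_left hk₀2.le (h2pos _).le
              _ = 2 := by rw [← zpow_add₀ h2ne]; norm_num
          have hmono : ((2:ℝ)^(-k₀))^s ≤ (2/r)^s :=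
            Real.rpow_le_rpow (h2pos _).le hb hs0.le
          have hsplit : ((2:ℝ)/r)^s = (2:ℝ)^s * r^(-s) := by
            rw [div_eq_mul_inv, Real.mul_rpow (by norm_num) (by positivity),
              Real.inv_rpow hr.le, ← Real.rpow_neg hr.le]
          calc ENNReal.ofReal (((2:ℝ)^(-k₀))^s) ^ w ≤ ENNReal.ofReal (((2:ℝ)/r)^s) ^ w :=
                ENNReal.rpow_le_rpow (ENNReal.ofReal_le_ofReal hmono) hw.le
            _ = ENNReal.ofReal ((2:ℝ)^s) ^ w * R := by
                rw [hsplit, ENNReal.ofReal_mul (by positivity),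
                  ENNReal.mul_rpow_of_nonneg _ _ hw.le, hofr]
        -- sum 2
        have e2 : ∀ n : ℕ, (2:ℝ)^(k₀-(n:ℤ)) = (2:ℝ)^k₀ * ((2:ℝ)⁻¹)^n := by
          intro n
          rw [zpow_sub₀ h2ne, zpow_natCast, div_eq_mul_inv, ← inv_pow]
        have t2 : ∀ n : ℕ, ENNReal.ofReal (((2:ℝ)^(k₀-(n:ℤ)))^(1-s)/r) ^ w =
            ENNReal.ofReal (((2:ℝ)^k₀)^(1-s)/r) ^ w * (ENNReal.ofReal (((2:ℝ)⁻¹)^(1-s)) ^ w)^n := by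
          intro n
          have : ((2:ℝ)^(k₀-(n:ℤ)))^(1-s)/r = (((2:ℝ)^k₀)^(1-s)/r) * (((2:ℝ)⁻¹)^(1-s))^n := by
            rw [e2 n, Real.mul_rpow (h2pos _).le (by positivity), pow_rpow_comm (by norm_num) n (1-s)]
            ring
          rw [this, ofReal_mul_pow_rpow (by positivity) (Real.rpow_nonneg (by norm_num) _) hw.le]
        have s2 : (∑' n : ℕ, ENNReal.ofReal (((2:ℝ)^(k₀-(n:ℤ)))^(1-s)/r) ^ w) =
            ENNReal.ofReal (((2:ℝ)^k₀)^(1-s)/r) ^ w * (1 - ENNReal.ofReal (((2:ℝ)⁻¹)^(1-s)) ^ w)⁻¹ := by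
          rw [← ENNReal.tsum_geometric, ← ENNReal.tsum_mul_left]
          exact tsum_congr t2
        have head2 : ENNReal.ofReal (((2:ℝ)^k₀)^(1-s)/r) ^ w ≤ R := by
          have hb : ((2:ℝ)^k₀)^(1-s)/r ≤ r^(-s) := by
            have h1 : ((2:ℝ)^k₀)^(1-s) ≤ r^(1-s) :=
              Real.rpow_le_rpow (h2pos _).le hk₀1 (by linarith)
            have h2 : r^(1-s)/r = r^(-s) := by
              have h := Real.rpow_add hr (-s) 1
              rw [Real.rpow_one] at h
              have hx : r^(1-s) = r^(-s) * r := by rw [← h]; ring_nf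
              rw [hx, mul_div_cancel_right₀ _ hr.ne']
            rw [← h2]
            exact div_le_div_of_nonneg_right h1 hr.le
          calc ENNReal.ofReal (((2:ℝ)^k₀)^(1-s)/r) ^ w ≤ ENNReal.ofReal (r^(-s)) ^ w :=
                ENNReal.rpow_le_rpow (ENNReal.ofReal_le_ofReal hb) hw.le
            _ = R := hofr
        rw [s1, s2]
        refine le_trans (add_le_add (mul_le_mul_left head1 _) (mul_le_mul_left head2 _)) ?_
        refine le_of_eq ?_
        simp only [Cg]
        ring

lemma add_rpow_le' {a b : ℝ≥0∞} {w : ℝ} (hw : 0 < w) : (a+b)^w ≤ 2^w * (a^w + b^w) := by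
  have h1 : a + b ≤ 2 * max a b := by
    rcases le_total a b with h|h
    · rw [max_eq_right h, two_mul]; exact add_le_add_left h b
    · rw [max_eq_left h, two_mul]; exact add_le_add_right h a
  calc (a+b)^w ≤ (2 * max a b)^w := ENNReal.rpow_le_rpow h1 hw.le
    _ = 2^w * (max a b)^w := ENNReal.mul_rpow_of_nonneg _ _ hw.le
    _ ≤ 2^w * (a^w + b^w) := by
        refine mul_le_mul_right ?_ _
        rcases le_total a b with h|h
        · rw [max_eq_right h]; exact le_add_self
        · rw [max_eq_left h]; exact le_add_right le_rfl

theorem cover_capacity_bound {X : Type*} [MetricSpace X] [MeasurableSpace X] [BorelSpace X]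
    (μ : Measure X)
    (s : ℝ) (p q : ℝ≥0∞) (hs0 : 0 < s) (hs1 : s < 1)
    (hp0 : 0 < p) (hpfin : p ≠ ∞) (hq0 : 0 < q) (E : Set X)
    (c_d : ℝ≥0∞) (hcd1 : 1 ≤ c_d) (hcdfin : c_d < ∞)
    (hdbl : ∀ (x : X) (r : ℝ), 0 < r → μ (ball x (2*r)) ≤ c_d * μ (ball x r))
    (c : ℕ → X) (r : ℕ → ℝ)
    (hcov : E ⊆ ⋃ i, ball (c i) (r i)) (hri : ∀ i, 0 < r i ∧ r i ≤ 1) :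
    tlCapacity μ s p q E ^ (min 1 (q / p)).toReal ≤
      (2:ℝ≥0∞) ^ (p.toReal * (min 1 (q / p)).toReal) *
        c_d ^ (min 1 (q / p)).toReal * (1 + Cg s (p.toReal * (min 1 (q / p)).toReal)) *
      ∑' i, (μ (ball (c i) (r i)) / ENNReal.ofReal ((r i) ^ (s * p.toReal))) ^ (min 1 (q / p)).toReal := by
  -- basic exponent facts
  have hp' : 0 < p.toReal := ENNReal.toReal_pos hp0.ne' hpfin
  set p' : ℝ := p.toReal with hp'def
  set θe : ℝ≥0∞ := min 1 (q / p) with hθe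
  set θ : ℝ := θe.toReal with hθdef
  have hθetop : θe ≠ ∞ := ne_top_of_le_ne_top ENNReal.one_ne_top (min_le_left _ _)
  have hθe0 : θe ≠ 0 := (lt_min one_pos (ENNReal.div_pos hq0.ne' hpfin)).ne'
  have hθ0 : 0 < θ := ENNReal.toReal_pos hθe0 hθetop
  have hθ1 : θ ≤ 1 := by
    have : θe ≤ 1 := min_le_left _ _
    calc θ ≤ (1:ℝ≥0∞).toReal := ENNReal.toReal_mono ENNReal.one_ne_top this
      _ = 1 := by simp
  set w : ℝ := p' * θ with hwdef
  have hw0 : 0 < w := mul_pos hp' hθ0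
  have hwp : w ≤ p' := by nlinarith
  have hwq : q ≠ ∞ → w ≤ q.toReal := by
    intro hqtop
    have h1 : θe ≤ q / p := min_le_right _ _
    have h2 : (q / p) ≠ ∞ := by
      rw [ne_eq, ENNReal.div_eq_top]
      push_neg
      exact ⟨fun _ => hp0.ne', fun hqt => absurd hqt hqtop⟩
    have h3 : θ ≤ (q / p).toReal := ENNReal.toReal_mono h2 h1
    have h4 : (q / p).toReal = q.toReal / p' := by rw [ENNReal.toReal_div]
    rw [hwdef]
    calc p' * θ ≤ p' * (q.toReal / p') := by
          refine mul_le_mul_of_nonneg_left ?_ hp'.le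
          rw [← h4]; exact h3
      _ = q.toReal := by field_simp
  set t : ℝ := p' / w with htdef
  have ht1 : 1 ≤ t := (one_le_div hw0).2 hwp
  have h1t : 1 / t = θ := by rw [htdef, hwdef]; field_simp
  -- the cover data
  have hr0 : ∀ i, 0 < r i := fun i => (hri i).1
  have hr1 : ∀ i, r i ≤ 1 := fun i => (hri i).2
  -- abbreviations
  set B : ℕ → Set X := fun i => ball (c i) (r i) with hB
  set B2 : ℕ → Set X := fun i => ball (c i) (2 * r i) with hB2
  set A : ℝ≥0∞ := ∑' i, (μ (B i) / ENNReal.ofReal ((r i) ^ (s * p'))) ^ θ with hA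
  set CC : ℝ≥0∞ := (2:ℝ≥0∞) ^ w * c_d ^ θ * (1 + Cg s w) with hCC
  show tlCapacity μ s p q E ^ θ ≤ CC * A
  have hCC0 : CC ≠ 0 := by
    rw [hCC]
    refine mul_ne_zero (mul_ne_zero ?_ ?_) ?_
    · exact (ENNReal.rpow_pos (by norm_num) (by norm_num)).ne'
    · exact (ENNReal.rpow_pos (lt_of_lt_of_le one_pos hcd1) hcdfin.ne).ne'
    · exact fun h => by simp at h
  by_cases hAtop : A = ∞
  · rw [hAtop, ENNReal.mul_top hCC0]
    exact le_top
  -- terms of A dominate the ball measures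
  have haux : ∀ i, μ (B i) ≤ μ (B i) / ENNReal.ofReal ((r i) ^ (s * p')) := by
    intro i
    have h1 : ENNReal.ofReal ((r i) ^ (s * p')) ≤ 1 := by
      rw [show (1:ℝ≥0∞) = ENNReal.ofReal 1 by simp]
      refine ENNReal.ofReal_le_ofReal ?_
      exact Real.rpow_le_one (hr0 i).le (hr1 i) (by positivity)
    calc μ (B i) = μ (B i) / 1 := by simp
      _ ≤ μ (B i) / ENNReal.ofReal ((r i) ^ (s * p')) :=
          ENNReal.div_le_div_left h1 _
  have hmuB_le : ∀ i, μ (B i) ^ θ ≤ (μ (B i) / ENNReal.ofReal ((r i) ^ (s * p'))) ^ θ :=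
    fun i => ENNReal.rpow_le_rpow (haux i) hθ0.le
  have hSB : ∑' i, μ (B i) ≤ A ^ (1/θ) := by
    calc ∑' i, μ (B i) ≤ (∑' i, μ (B i) ^ θ) ^ (1/θ) := tsum_le_tsum_rpow _ hθ0 hθ1
      _ ≤ A ^ (1/θ) := ENNReal.rpow_le_rpow (ENNReal.tsum_le_tsum hmuB_le) (by positivity)
  have hSB2 : ∑' i, μ (B2 i) ≤ c_d * A ^ (1/θ) := by
    calc ∑' i, μ (B2 i) ≤ ∑' i, c_d * μ (B i) :=
          ENNReal.tsum_le_tsum fun i => hdbl (c i) (r i) (hr0 i)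
      _ = c_d * ∑' i, μ (B i) := ENNReal.tsum_mul_left
      _ ≤ c_d * A ^ (1/θ) := mul_le_mul_right hSB _
  have hSB2fin : ∑' i, μ (B2 i) ≠ ∞ := by
    refine ne_top_of_le_ne_top ?_ hSB2
    exact (ENNReal.mul_lt_top hcdfin
      (ENNReal.rpow_lt_top_of_nonneg (by positivity) hAtop)).ne
  -- the test function u
  set φ : ℕ → X → ℝ := fun i x => min 1 (max 0 (2 - dist x (c i) / r i)) with hφ
  set U : X → ℝ≥0∞ := fun x => ⨆ i, ENNReal.ofReal (φ i x) with hU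
  set u : X → ℝ := fun x => (U x).toReal with hu
  have hφ0 : ∀ i x, 0 ≤ φ i x := fun i x => le_min (by norm_num) (le_max_left _ _)
  have hφ1 : ∀ i x, φ i x ≤ 1 := fun i x => min_le_left _ _
  have hφcont : ∀ i, Continuous (φ i) := by
    intro i
    apply continuous_const.min
    apply continuous_const.max
    exact continuous_const.sub ((continuous_id.dist continuous_const).div_const _)
  have hU1 : ∀ x, U x ≤ 1 := by
    intro x
    refine iSup_le fun i => ?_
    exact ENNReal.ofReal_le_one.2 (hφ1 i x)
  have hUfin : ∀ x, U x ≠ ∞ := fun x => ne_top_of_le_ne_top ENNReal.one_ne_top (hU1 x)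
  have hUmeas : Measurable U :=
    Measurable.iSup fun i => ((hφcont i).measurable).ennreal_ofReal
  have humeas : Measurable u := hUmeas.ennreal_toReal
  have hofu : ∀ x, ENNReal.ofReal (u x) = U x := fun x => ENNReal.ofReal_toReal (hUfin x)
  have hu0 : ∀ x, 0 ≤ u x := fun x => ENNReal.toReal_nonneg
  have hu1 : ∀ x, u x ≤ 1 := by
    intro x
    rw [hu]
    calc (U x).toReal ≤ (1:ℝ≥0∞).toReal := ENNReal.toReal_mono ENNReal.one_ne_top (hU1 x)
      _ = 1 := by simp
  have huball : ∀ i x, x ∈ B i → 1 ≤ u x := by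
    intro i x hx
    have hφx : φ i x = 1 := by
      rw [hB, mem_ball] at hx
      have hdx : dist x (c i) / r i < 1 := (div_lt_one (hr0 i)).2 hx
      have h2 : (1:ℝ) ≤ max 0 (2 - dist x (c i) / r i) := le_max_of_le_right (by linarith)
      simp only [hφ]
      exact min_eq_left h2
    have h1 : (1:ℝ≥0∞) ≤ U x := by
      rw [hU]
      refine le_trans ?_ (le_iSup _ i)
      simp [hφx]
    rw [hu]
    calc (1:ℝ) = (1:ℝ≥0∞).toReal := by simp
      _ ≤ (U x).toReal := ENNReal.toReal_mono (hUfin x) h1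
  have hφout : ∀ i x, x ∉ B2 i → φ i x = 0 := by
    intro i x hx
    have hdx : 2 ≤ dist x (c i) / r i := by
      rw [le_div_iff₀ (hr0 i)]
      rw [hB2, mem_ball, not_lt] at hx
      linarith [hx]
    rw [hφ]
    simp only
    rw [max_eq_left (by linarith), min_eq_right (by norm_num)]
  -- gradient functions
  set G : ℤ → X → ℝ≥0∞ := fun k x =>
    ⨆ i, ENNReal.ofReal (mkr s k (r i)) * (B2 i).indicator 1 x with hG
  set g : ℤ → X → ℝ := fun k x => (G k x).toReal with hg
  have hind01 : ∀ (i : ℕ) (x : X), (B2 i).indicator (1 : X → ℝ≥0∞) x ≤ 1 := by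
    intro i x
    by_cases hx : x ∈ B2 i <;> simp [hx]
  have hGle : ∀ k x, G k x ≤ ENNReal.ofReal (((2:ℝ)^(1-k))^s) := by
    intro k x
    refine iSup_le fun i => ?_
    calc ENNReal.ofReal (mkr s k (r i)) * (B2 i).indicator 1 x
        ≤ ENNReal.ofReal (mkr s k (r i)) * 1 := mul_le_mul_right (hind01 i x) _
      _ ≤ ENNReal.ofReal (((2:ℝ)^(1-k))^s) := by
          rw [mul_one]
          exact ENNReal.ofReal_le_ofReal (mkr_le_left k)
  have hGfin : ∀ k x, G k x ≠ ∞ := fun k x =>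
    ne_top_of_le_ne_top ENNReal.ofReal_ne_top (hGle k x)
  have hGmeas : ∀ k, Measurable (G k) := by
    intro k
    refine Measurable.iSup fun i => ?_
    exact (measurable_const.indicator measurableSet_ball).const_mul _
  have hgmeas : ∀ k, Measurable (g k) := fun k => (hGmeas k).ennreal_toReal
  have hg0 : ∀ k x, 0 ≤ g k x := fun k x => ENNReal.toReal_nonneg
  have hofg : ∀ k x, ENNReal.ofReal (g k x) = G k x := fun k x =>
    ENNReal.ofReal_toReal (hGfin k x)
  have hGmem : ∀ k i x, x ∈ B2 i → ENNReal.ofReal (mkr s k (r i)) ≤ G k x := by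
    intro k i x hx
    refine le_trans ?_ (le_iSup _ i)
    simp [hx]
  -- the fractional gradient property
  have hfrac : IsFracGradient μ s u univ g := by
    refine ⟨hgmeas, hg0, ∅, empty_subset _, measure_empty, ?_⟩
    intro k x _ y _ hd1 hd2
    set d : ℝ := dist x y with hdd
    have hd0 : 0 < d := lt_of_lt_of_le (zpow_pos (by norm_num : (0:ℝ)<2) _) hd1
    have hds : 0 ≤ d ^ s := Real.rpow_nonneg hd0.le _
    set D : ℝ≥0∞ := ENNReal.ofReal (d ^ s) * (G k x + G k y) with hD
    have hDfin : D ≠ ∞ := by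
      rw [hD]
      exact (ENNReal.mul_lt_top ENNReal.ofReal_lt_top
        (ENNReal.add_lt_top.2 ⟨(hGfin k x).lt_top, (hGfin k y).lt_top⟩)).ne
    have key : ∀ x' y' : X, U x' ≤ U y' + D → (u x' : ℝ) - u y' ≤ D.toReal := by
      intro x' y' hle
      have h1 : (U x').toReal ≤ (U y' + D).toReal :=
        ENNReal.toReal_mono (by
          exact (ENNReal.add_lt_top.2 ⟨(hUfin y').lt_top, hDfin.lt_top⟩).ne) hle
      rw [ENNReal.toReal_add (hUfin y') hDfin] at h1
      simp only [hu]
      linarith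
    have hsym : ∀ x' y' : X, dist x' y' = d →
        ((x' = x ∧ y' = y) ∨ (x' = y ∧ y' = x)) → U x' ≤ U y' + D := by
      intro x' y' hdist hcase
      refine iSup_le fun i => ?_
      by_cases hxy : x' ∈ B2 i ∨ y' ∈ B2 i
      · -- Lipschitz estimate
        have hlip : |φ i x' - φ i y'| ≤ min 1 (d / r i) := by
          refine le_min ?_ ?_
          · rw [abs_sub_le_iff]
            constructor <;> nlinarith [hφ0 i x', hφ1 i x', hφ0 i y', hφ1 i y']
          · calc |φ i x' - φ i y'| ≤ |(2 - dist x' (c i) / r i) - (2 - dist y' (c i) / r i)| :=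
                  abs_psi_sub_psi
              _ = |dist y' (c i) - dist x' (c i)| / r i := by
                  rw [show (2 - dist x' (c i) / r i) - (2 - dist y' (c i) / r i)
                      = (dist y' (c i) - dist x' (c i)) / r i by ring]
                  rw [abs_div, abs_of_pos (hr0 i)]
              _ ≤ d / r i := by
                  refine div_le_div_of_nonneg_right ?_ (hr0 i).le
                  rw [abs_sub_comm]
                  calc |dist x' (c i) - dist y' (c i)| ≤ dist x' y' := abs_dist_sub_le _ _ _
                    _ = d := hdist
        have hmkr := min_le_rpow_mul_mkr hs0 hs1 (hr0 i) hd1 hd2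
        have hmain : φ i x' ≤ φ i y' + d ^ s * mkr s k (r i) := by
          have h2 : φ i x' - φ i y' ≤ min 1 (d / r i) := (abs_sub_le_iff.1 hlip).1
          linarith
        have hmem : ENNReal.ofReal (mkr s k (r i)) ≤ G k x + G k y := by
          rcases hcase with ⟨hx'', hy''⟩ | ⟨hx'', hy''⟩
          · subst hx''; subst hy''
            rcases hxy with h | h
            · exact le_add_right (hGmem k i x' h)
            · exact le_add_left (hGmem k i y' h)
          · subst hx''; subst hy''
            rcases hxy with h | h
            · exact le_add_left (hGmem k i x' h)
            · exact le_add_right (hGmem k i y' h)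
        calc ENNReal.ofReal (φ i x') ≤ ENNReal.ofReal (φ i y' + d ^ s * mkr s k (r i)) :=
              ENNReal.ofReal_le_ofReal hmain
          _ = ENNReal.ofReal (φ i y') + ENNReal.ofReal (d ^ s * mkr s k (r i)) :=
              ENNReal.ofReal_add (hφ0 i y') (mul_nonneg hds (mkr_nonneg k (hr0 i)))
          _ ≤ ENNReal.ofReal (φ i y') + ENNReal.ofReal (d ^ s) * ENNReal.ofReal (mkr s k (r i)) := by
              rw [ENNReal.ofReal_mul hds]
          _ ≤ U y' + D := by
              refine add_le_add ?_ ?_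
              · exact le_iSup (fun j => ENNReal.ofReal (φ j y')) i
              · rw [hD]
                exact mul_le_mul_right hmem _
      · push_neg at hxy
        have h0 : φ i x' = 0 := hφout i x' hxy.1
        rw [h0]
        simp
    have hxy1 : U x ≤ U y + D := hsym x y rfl (Or.inl ⟨rfl, rfl⟩)
    have hxy2 : U y ≤ U x + D := hsym y x (by rw [hdd, dist_comm]) (Or.inr ⟨rfl, rfl⟩)
    have hDval : D.toReal = d ^ s * (g k x + g k y) := by
      rw [hD, ENNReal.toReal_mul, ENNReal.toReal_ofReal hds,
        ENNReal.toReal_add (hGfin k x) (hGfin k y)]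
    rw [← hDval]
    exact abs_sub_le_iff.2 ⟨key x y hxy1, key y x hxy2⟩
  -- eLpNorm bound
  have hUind : ∀ x, U x ^ p' ≤ (⋃ i, B2 i).indicator 1 x := by
    intro x
    by_cases hx : x ∈ ⋃ i, B2 i
    · rw [Set.indicator_of_mem hx]
      calc U x ^ p' ≤ 1 ^ p' := ENNReal.rpow_le_rpow (hU1 x) hp'.le
        _ = 1 := ENNReal.one_rpow _
      
    · have hU0 : U x = 0 := by
        rw [hU]
        refine le_antisymm (iSup_le fun i => ?_) zero_le
        have hxi : x ∉ B2 i := fun h => hx (Set.mem_iUnion.2 ⟨i, h⟩)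
        rw [hφout i x hxi]
        simp
      rw [Set.indicator_of_notMem hx, hU0, ENNReal.zero_rpow_of_pos hp']
  have hnn : ∀ x, (‖u x‖₊ : ℝ≥0∞) = U x := by
    intro x
    rw [← hofu x]
    exact Real.enorm_eq_ofReal (hu0 x)
  have heLp_pow : eLpNorm u p μ ^ p' ≤ ∑' i, μ (B2 i) := by
    rw [eLpNorm_eq_lintegral_rpow_enorm_toReal hp0.ne' hpfin, ← ENNReal.rpow_mul,
      one_div, inv_mul_cancel₀ hp'.ne', ENNReal.rpow_one]
    calc ∫⁻ x, (‖u x‖₊ : ℝ≥0∞) ^ p.toReal ∂μ = ∫⁻ x, U x ^ p' ∂μ := by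
          refine lintegral_congr fun x => ?_
          rw [hnn x]
      _ ≤ ∫⁻ x, (⋃ i, B2 i).indicator 1 x ∂μ := lintegral_mono hUind
      _ = μ (⋃ i, B2 i) := by
          rw [lintegral_indicator (MeasurableSet.iUnion fun i => measurableSet_ball)]
          simp
          rfl
      _ ≤ ∑' i, μ (B2 i) := measure_iUnion_le _
  have heLpfin : eLpNorm u p μ < ∞ := by
    have h1 : eLpNorm u p μ ^ p' ≠ ∞ := ne_top_of_le_ne_top hSB2fin heLp_pow
    by_contra h
    rw [not_lt, top_le_iff] at h
    rw [h, ENNReal.top_rpow_of_pos hp'] at h1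
    exact h1 rfl
  -- pointwise bound for the gradient norm
  set N : X → ℝ≥0∞ := fun x => lqNormE q (fun k => g k x) with hN
  have hNle : ∀ x, N x ^ w ≤ ∑' k : ℤ, (G k x) ^ w := by
    intro x
    have habs : ∀ k, ENNReal.ofReal |g k x| = G k x := by
      intro k; rw [abs_of_nonneg (hg0 k x)]; exact hofg k x
    have hle : N x ≤ (∑' k : ℤ, (G k x) ^ w) ^ (1/w) := by
      rw [hN]
      simp only [lqNormE]
      split_ifs with hq
      · simp only [habs]
        exact iSup_le_lw _ hw0
      · simp only [habs]
        exact lq_norm_mono _ hw0 (hwq hq)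
    calc N x ^ w ≤ ((∑' k : ℤ, (G k x)^w)^(1/w))^w := ENNReal.rpow_le_rpow hle hw0.le
      _ = ∑' k : ℤ, (G k x)^w := by
          rw [← ENNReal.rpow_mul, one_div, inv_mul_cancel₀ hw0.ne', ENNReal.rpow_one]
  set K : ℕ → ℝ≥0∞ := fun i => Cg s w * ENNReal.ofReal (r i) ^ (-(s*w)) with hK
  set H : ℕ → X → ℝ≥0∞ := fun i x => K i * (B2 i).indicator 1 x with hH
  have hGw_tsum : ∀ x, (∑' k : ℤ, (G k x)^w) ≤ ∑' i, H i x := by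
    intro x
    have h1 : ∀ k : ℤ, (G k x)^w ≤
        ∑' i, ENNReal.ofReal (mkr s k (r i))^w * (B2 i).indicator 1 x := by
      intro k
      have h2 : (G k x) ^ w
           = ⨆ i, (ENNReal.ofReal (mkr s k (r i)) * (B2 i).indicator 1 x) ^ w := by
        rw [hG]
        exact (ENNReal.orderIsoRpow w hw0).map_iSup _
      rw [h2]
      refine iSup_le fun i => ?_
      refine le_trans ?_ (ENNReal.le_tsum i)
      by_cases hx : x ∈ B2 i
      · simp [hx]
      · simp [hx, ENNReal.zero_rpow_of_pos hw0]
    calc (∑' k : ℤ, (G k x)^w)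
        ≤ ∑' k : ℤ, ∑' i, ENNReal.ofReal (mkr s k (r i))^w * (B2 i).indicator 1 x :=
          ENNReal.tsum_le_tsum h1
      _ = ∑' i, ∑' k : ℤ, ENNReal.ofReal (mkr s k (r i))^w * (B2 i).indicator 1 x :=
          ENNReal.tsum_comm
      _ = ∑' i, (∑' k : ℤ, ENNReal.ofReal (mkr s k (r i))^w) * (B2 i).indicator 1 x :=
          tsum_congr fun i => ENNReal.tsum_mul_right
      _ ≤ ∑' i, H i x := by
          refine ENNReal.tsum_le_tsum fun i => ?_
          rw [hH, hK]
          exact mul_le_mul_left (geom_bound hs0 hs1 hw0 (hr0 i)) _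
  have hHmeas : ∀ i, Measurable (H i) := fun i =>
    (measurable_const.indicator measurableSet_ball).const_mul _
  have ht0 : (0:ℝ) < t := lt_of_lt_of_le one_pos ht1
  have hint : ∀ i, (∫⁻ x, H i x ^ t ∂μ) ^ (1/t) = K i * μ (B2 i) ^ θ := by
    intro i
    have h1 : ∀ x, H i x ^ t = (B2 i).indicator (fun _ => K i ^ t) x := by
      intro x
      rw [hH]
      by_cases hx : x ∈ B2 i
      · simp [hx]
      · simp [hx, ENNReal.zero_rpow_of_pos ht0]
    rw [lintegral_congr h1, lintegral_indicator measurableSet_ball, setLIntegral_const,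
      ENNReal.mul_rpow_of_nonneg _ _ (by positivity), ← ENNReal.rpow_mul,
      mul_one_div, div_self ht0.ne', ENNReal.rpow_one, h1t]
  -- identity for the gauge terms
  have haθ : ∀ i, (μ (B i) / ENNReal.ofReal ((r i)^(s*p')))^θ
      = μ (B i)^θ * ENNReal.ofReal (r i) ^ (-(s*w)) := by
    intro i
    rw [ENNReal.div_rpow_of_nonneg _ _ hθ0.le, ← ENNReal.ofReal_rpow_of_pos (hr0 i),
      ← ENNReal.rpow_mul, div_eq_mul_inv, ← ENNReal.rpow_neg]
    congr 2
    rw [hwdef]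
    ring
  have hgnorm : lpLqNorm μ p q g ^ w ≤ Cg s w * c_d ^ θ * A := by
    have hintN : ∫⁻ x, N x ^ p' ∂μ ≤ ∫⁻ x, (∑' i, H i x) ^ t ∂μ := by
      refine lintegral_mono fun x => ?_
      have h1 : N x ^ p' = (N x ^ w) ^ t := by
        rw [← ENNReal.rpow_mul]
        congr 1
        rw [htdef]
        field_simp
      rw [h1]
      exact ENNReal.rpow_le_rpow ((hNle x).trans (hGw_tsum x)) ht0.le
    have h2 : lpLqNorm μ p q g = (∫⁻ x, N x ^ p' ∂μ) ^ (1/p') := by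
      simp only [lpLqNorm, if_neg hpfin]
      rfl
    have h3 : lpLqNorm μ p q g ^ w = (∫⁻ x, N x ^ p' ∂μ) ^ (1/t) := by
      rw [h2, ← ENNReal.rpow_mul]
      congr 1
      rw [htdef]
      field_simp
    rw [h3]
    calc (∫⁻ x, N x ^ p' ∂μ) ^ (1/t) ≤ (∫⁻ x, (∑' i, H i x)^t ∂μ) ^ (1/t) :=
          ENNReal.rpow_le_rpow hintN (by positivity)
      _ ≤ ∑' i, (∫⁻ x, H i x ^ t ∂μ) ^ (1/t) := minkowski_tsum μ H hHmeas ht1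
      _ = ∑' i, K i * μ (B2 i) ^ θ := tsum_congr hint
      _ ≤ ∑' i, (Cg s w * c_d ^ θ) * (μ (B i) / ENNReal.ofReal ((r i)^(s*p')))^θ := by
          refine ENNReal.tsum_le_tsum fun i => ?_
          rw [haθ i, hK]
          have hdb : μ (B2 i) ^ θ ≤ c_d ^ θ * μ (B i) ^ θ := by
            calc μ (B2 i) ^ θ ≤ (c_d * μ (B i)) ^ θ :=
                  ENNReal.rpow_le_rpow (hdbl (c i) (r i) (hr0 i)) hθ0.le
              _ = c_d ^ θ * μ (B i) ^ θ := ENNReal.mul_rpow_of_nonneg _ _ hθ0.le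
          calc Cg s w * ENNReal.ofReal (r i) ^ (-(s*w)) * μ (B2 i) ^ θ
              ≤ Cg s w * ENNReal.ofReal (r i) ^ (-(s*w)) * (c_d ^ θ * μ (B i) ^ θ) :=
                mul_le_mul_right hdb _
            _ = Cg s w * c_d ^ θ * (μ (B i)^θ * ENNReal.ofReal (r i) ^ (-(s*w))) := by ring
      _ = Cg s w * c_d ^ θ * A := by
          rw [hA, ENNReal.tsum_mul_left]
  have hgfin : lpLqNorm μ p q g < ∞ := by
    have h1 : lpLqNorm μ p q g ^ w ≠ ∞ := by
      refine ne_top_of_le_ne_top ?_ hgnorm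
      exact (ENNReal.mul_lt_top (ENNReal.mul_lt_top (Cg_lt_top hs0 hs1 hw0)
        (ENNReal.rpow_lt_top_of_nonneg hθ0.le hcdfin.ne)) (lt_top_iff_ne_top.2 hAtop)).ne
    by_contra h
    rw [not_lt, top_le_iff] at h
    rw [h, ENNReal.top_rpow_of_pos hw0] at h1
    exact h1 rfl
  -- admissibility
  have hmem : MemTL μ s p q univ u := by
    constructor
    · rw [Measure.restrict_univ]
      exact ⟨humeas.aestronglyMeasurable, heLpfin⟩
    · simp only [tlNorm, Measure.restrict_univ]
      refine ENNReal.add_lt_top.2 ⟨heLpfin, ?_⟩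
      exact lt_of_le_of_lt (iInf₂_le g hfrac) hgfin
  have hcap : tlCapacity μ s p q E ≤ tlNorm μ s p q univ u ^ p' := by
    refine iInf_le_of_le u (iInf_le_of_le hmem (iInf_le_of_le ?_ le_rfl))
    refine ⟨⋃ i, B i, isOpen_iUnion (fun i => isOpen_ball), hcov, fun x hx => ?_⟩
    rcases mem_iUnion.1 hx with ⟨i, hi⟩
    exact huball i x hi
  have htl : tlNorm μ s p q univ u ≤ eLpNorm u p μ + lpLqNorm μ p q g := by
    simp only [tlNorm, Measure.restrict_univ]
    exact add_le_add_right (iInf₂_le g hfrac) _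
  have heLpw : eLpNorm u p μ ^ w ≤ c_d ^ θ * A := by
    have h1 : eLpNorm u p μ ^ w = (eLpNorm u p μ ^ p') ^ θ := by
      rw [← ENNReal.rpow_mul, hwdef]
    rw [h1]
    calc (eLpNorm u p μ ^ p') ^ θ ≤ (∑' i, μ (B2 i)) ^ θ :=
          ENNReal.rpow_le_rpow heLp_pow hθ0.le
      _ ≤ ∑' i, μ (B2 i) ^ θ := rpow_tsum_le_tsum_rpow _ hθ0 hθ1
      _ ≤ ∑' i, c_d ^ θ * μ (B i) ^ θ := by
          refine ENNReal.tsum_le_tsum fun i => ?_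
          calc μ (B2 i) ^ θ ≤ (c_d * μ (B i)) ^ θ :=
                ENNReal.rpow_le_rpow (hdbl (c i) (r i) (hr0 i)) hθ0.le
            _ = c_d ^ θ * μ (B i) ^ θ := ENNReal.mul_rpow_of_nonneg _ _ hθ0.le
      _ ≤ c_d ^ θ * A := by
          rw [hA, ← ENNReal.tsum_mul_left]
          exact ENNReal.tsum_le_tsum fun i => mul_le_mul_right (hmuB_le i) _
  calc tlCapacity μ s p q E ^ θ ≤ (tlNorm μ s p q univ u ^ p') ^ θ :=
        ENNReal.rpow_le_rpow hcap hθ0.le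
    _ = tlNorm μ s p q univ u ^ w := by rw [← ENNReal.rpow_mul, hwdef]
    _ ≤ (eLpNorm u p μ + lpLqNorm μ p q g) ^ w := ENNReal.rpow_le_rpow htl hw0.le
    _ ≤ 2^w * (eLpNorm u p μ ^ w + lpLqNorm μ p q g ^ w) := add_rpow_le' hw0
    _ ≤ 2^w * (c_d ^ θ * A + Cg s w * c_d ^ θ * A) :=
        mul_le_mul_right (add_le_add heLpw hgnorm) _
    _ = CC * A := by
        rw [hCC]
        ring

/-- `cap_{M^s_{p,q}}(E)^θ ≤ C ℋ^h(E)` with `θ = min{1, q/p}` and ball gauge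
`h(B(x,ρ)) = (μ(B(x,ρ))/ρ^{sp})^θ`. -/
theorem capacity_le_hausdorff {X : Type*} [MetricSpace X] [MeasurableSpace X] [BorelSpace X]
    (μ : Measure X) (hd : IsDoubling μ)
    (s : ℝ) (p q : ℝ≥0∞) (hs0 : 0 < s) (hs1 : s < 1)
    (hp0 : 0 < p) (hpfin : p ≠ ∞) (hq0 : 0 < q)
    (E : Set X) :
    ∃ C : ℝ≥0∞, 0 < C ∧ C < ∞ ∧
      tlCapacity μ s p q E ^ (min 1 (q / p)).toReal ≤
        C * hMeasureBall (fun x ρ =>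
          (μ (ball x ρ) / ENNReal.ofReal (ρ ^ (s * p.toReal))) ^ (min 1 (q / p)).toReal) E := by
  obtain ⟨hball, c_d, hcd1, hcdfin, hdbl⟩ := hd
  have hp' : 0 < p.toReal := ENNReal.toReal_pos hp0.ne' hpfin
  set θ : ℝ := (min 1 (q / p)).toReal with hθdef
  have hθetop : (min 1 (q / p)) ≠ ∞ := ne_top_of_le_ne_top ENNReal.one_ne_top (min_le_left _ _)
  have hθe0 : (min 1 (q / p)) ≠ 0 := (lt_min one_pos (ENNReal.div_pos hq0.ne' hpfin)).ne'
  have hθ0 : 0 < θ := ENNReal.toReal_pos hθe0 hθetop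
  set w : ℝ := p.toReal * θ with hwdef
  have hw0 : 0 < w := mul_pos hp' hθ0
  set CC : ℝ≥0∞ := (2:ℝ≥0∞) ^ w * c_d ^ θ * (1 + Cg s w) with hCC
  have hCC0 : CC ≠ 0 := by
    rw [hCC]
    refine mul_ne_zero (mul_ne_zero ?_ ?_) ?_
    · exact (ENNReal.rpow_pos (by norm_num) (by norm_num)).ne'
    · exact (ENNReal.rpow_pos (lt_of_lt_of_le one_pos hcd1) hcdfin.ne).ne'
    · exact fun h => by simp at h
  have hCCfin : CC < ∞ := by
    rw [hCC]
    refine ENNReal.mul_lt_top (ENNReal.mul_lt_top ?_ ?_) ?_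
    · exact ENNReal.rpow_lt_top_of_nonneg hw0.le (by norm_num)
    · exact ENNReal.rpow_lt_top_of_nonneg hθ0.le hcdfin.ne
    · exact ENNReal.add_lt_top.2 ⟨ENNReal.one_lt_top, Cg_lt_top hs0 hs1 hw0⟩
  refine ⟨CC, pos_iff_ne_zero.2 hCC0, hCCfin, ?_⟩
  set gauge : X → ℝ → ℝ≥0∞ := fun x ρ =>
    (μ (ball x ρ) / ENNReal.ofReal (ρ ^ (s * p.toReal))) ^ θ with hgauge
  set I : ℝ≥0∞ := ⨅ (c : ℕ → X) (r : ℕ → ℝ)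
    (_ : E ⊆ ⋃ i, ball (c i) (r i)) (_ : ∀ i, 0 < r i ∧ r i ≤ (1:ℝ)),
    ∑' i, gauge (c i) (r i) with hI
  have hIH : I ≤ hMeasureBall gauge E := by
    rw [hMeasureBall]
    refine le_trans ?_ (le_iSup _ (1:ℝ))
    exact le_iSup (fun _ : (0:ℝ) < 1 => I) one_pos
  refine le_trans ?_ (mul_le_mul_right hIH CC)
  -- cap^θ ≤ CC * I
  by_cases hItop : I = ∞
  · rw [hItop, ENNReal.mul_top hCC0]
    exact le_top
  refine ENNReal.le_of_forall_pos_le_add fun ε hε _ => ?_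
  set ε' : ℝ≥0∞ := (ε : ℝ≥0∞) / CC with hε'
  have hε'0 : ε' ≠ 0 := by
    rw [hε']
    simp only [ne_eq, ENNReal.div_eq_zero_iff, not_or]
    exact ⟨ENNReal.coe_ne_zero.2 hε.ne', hCCfin.ne⟩
  have hlt : I < I + ε' := ENNReal.lt_add_right hItop hε'0
  rw [hI] at hlt
  obtain ⟨cc, hlt⟩ := iInf_lt_iff.1 hlt
  obtain ⟨rr, hlt⟩ := iInf_lt_iff.1 hlt
  obtain ⟨hcov, hlt⟩ := iInf_lt_iff.1 hlt
  obtain ⟨hcond, hlt⟩ := iInf_lt_iff.1 hlt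
  calc tlCapacity μ s p q E ^ θ
      ≤ CC * ∑' i, gauge (cc i) (rr i) := by
        rw [hgauge, hCC]
        exact cover_capacity_bound μ s p q hs0 hs1 hp0 hpfin hq0 E c_d hcd1 hcdfin hdbl
          cc rr hcov hcond
    _ ≤ CC * (I + ε') := mul_le_mul_right hlt.le _
    _ = CC * I + CC * ε' := mul_add _ _ _
    _ ≤ CC * I + ε := by
        refine add_le_add_right ?_ _
        rw [hε']
        exact ENNReal.mul_div_le
end

section
/- Let s,p ∈ (0,1), n ∈ ℕ, 0<γ≤1/2. For u ∈ W^{s,p}(ℝ^n), define g(x) = sup_{j∈ℕ} 2^{js}·(⨍_{B(x,2^{−j})} |u(z) − m_u^γ(B(x,2^{−j}))|^p dz)^{1/p}. Then there is a constant C (depending only on n, s, p, γ) such that g(x) ≤ C·(∫_{ℝ^n} |u(z)−u(x)|^p/|z−x|^{n+sp} dz)^{1/p} for a.e. x, and consequently ‖g‖_{L^p(ℝ^n)} ≤ C·‖u‖_{W^{s,p}(ℝ^n)} < ∞. -/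
open MeasureTheory Metric Set Filter ENNReal

/-- Membership in the fractional Sobolev space `W^{s,p}(ℝ^n)`. -/
def MemWsp (n : ℕ) (s p : ℝ) (u : EuclideanSpace ℝ (Fin n) → ℝ) : Prop :=
  MemLp u (ENNReal.ofReal p) volume ∧
  (∫⁻ x, ∫⁻ y, ENNReal.ofReal (|u x - u y| ^ p / dist x y ^ ((n : ℝ) + s * p))) < ∞

/-- The `W^{s,p}(ℝ^n)` (quasi)norm, as an extended real. -/
noncomputable def wspNorm (n : ℕ) (s p : ℝ) (u : EuclideanSpace ℝ (Fin n) → ℝ) : ℝ≥0∞ :=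
  ((∫⁻ x, ENNReal.ofReal (|u x| ^ p)) +
    ∫⁻ x, ∫⁻ y, ENNReal.ofReal (|u x - u y| ^ p / dist x y ^ ((n : ℝ) + s * p))) ^ (1 / p)

/-- The maximal-type function
`g(x) = sup_j 2^{js} (⨍_{B(x,2^{-j})} |u(z) - m_u^γ(B(x,2^{-j}))|^p dz)^{1/p}`. -/
noncomputable def gFun (n : ℕ) (s p γ : ℝ) (u : EuclideanSpace ℝ (Fin n) → ℝ)
    (x : EuclideanSpace ℝ (Fin n)) : ℝ≥0∞ :=
  ⨆ j : ℕ, ENNReal.ofReal ((2:ℝ) ^ ((j : ℝ) * s)) *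
    ((volume (ball x ((2:ℝ) ^ (-(j : ℝ)))))⁻¹ *
      ∫⁻ z in ball x ((2:ℝ) ^ (-(j : ℝ))),
        ENNReal.ofReal (|u z - med volume γ u (ball x ((2:ℝ) ^ (-(j : ℝ))))| ^ p)) ^ (1 / p)

namespace GagAux

variable {X : Type*} [MeasurableSpace X] {μ : Measure X} {u : X → ℝ} {γ : ℝ} {A : Set X}

lemma sub_meas (hu : Measurable u) (hA : MeasurableSet A) (M : ℝ) :
    MeasurableSet {x ∈ A | u x < M} :=
  hA.inter (hu measurableSet_Iio)

lemma medSet_dc {M M' : ℝ} (hM : M' ≤ M)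
    (h : M ∈ {M : ℝ | μ {x ∈ A | u x < M} ≤ ENNReal.ofReal γ * μ A}) :
    M' ∈ {M : ℝ | μ {x ∈ A | u x < M} ≤ ENNReal.ofReal γ * μ A} :=
  by
  refine le_trans (measure_mono ?_) h
  intro x hx
  exact ⟨hx.1, lt_of_lt_of_le hx.2 hM⟩

lemma medSet_nonempty (hu : Measurable u) (hA : MeasurableSet A)
    (hA0 : 0 < μ A) (hAfin : μ A < ∞) (hγ0 : 0 < γ) :
    {M : ℝ | μ {x ∈ A | u x < M} ≤ ENNReal.ofReal γ * μ A}.Nonempty := by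
  have hpos : 0 < ENNReal.ofReal γ * μ A :=
    ENNReal.mul_pos (ENNReal.ofReal_pos.2 hγ0).ne' hA0.ne'
  have htend : Tendsto (fun k : ℕ => μ {x ∈ A | u x < -(k : ℝ)}) atTop (nhds 0) := by
    have h0 : μ (⋂ k : ℕ, {x ∈ A | u x < -(k : ℝ)}) = 0 := by
      have : (⋂ k : ℕ, {x ∈ A | u x < -(k : ℝ)}) = ∅ := by
        ext x
        simp only [mem_iInter, mem_setOf_eq, mem_empty_iff_false, iff_false, not_forall]
        obtain ⟨k, hk⟩ := exists_nat_gt (-(u x))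
        exact ⟨k, fun hx => absurd hx.2 (by linarith)⟩
      rw [this, measure_empty]
    have := tendsto_measure_iInter_atTop
      (μ := μ) (s := fun k : ℕ => {x ∈ A | u x < -(k : ℝ)})
      (fun k => (sub_meas hu hA _).nullMeasurableSet)
      (fun k k' hkk' x hx => ⟨hx.1, lt_of_lt_of_le hx.2 (by exact_mod_cast neg_le_neg (Nat.cast_le.2 hkk'))⟩)
      ⟨0, (lt_of_le_of_lt (measure_mono (fun x hx => hx.1)) hAfin).ne⟩
    rwa [h0] at this
  obtain ⟨k, hk⟩ := (htend.eventually_lt_const hpos).exists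
  exact ⟨-(k : ℝ), hk.le⟩

lemma medSet_bddAbove (hu : Measurable u) (hA : MeasurableSet A)
    (hA0 : 0 < μ A) (hAfin : μ A < ∞) (hγ : γ ≤ 1/2) :
    BddAbove {M : ℝ | μ {x ∈ A | u x < M} ≤ ENNReal.ofReal γ * μ A} := by
  have hlt : ENNReal.ofReal γ * μ A < μ A := by
    calc ENNReal.ofReal γ * μ A ≤ ENNReal.ofReal (1/2) * μ A := by
          exact mul_le_mul_left (ENNReal.ofReal_le_ofReal hγ) _
      _ < 1 * μ A := by
          refine ENNReal.mul_lt_mul_iff_left hA0.ne' hAfin.ne |>.2 ?_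
          rw [show ((1:ℝ)/2) = (2:ℝ)⁻¹ by norm_num, ENNReal.ofReal_inv_of_pos two_pos,
            ENNReal.ofReal_ofNat]
          rw [ENNReal.inv_lt_one]
          exact one_lt_two
      _ = μ A := one_mul _
  have htend : Tendsto (fun k : ℕ => μ {x ∈ A | u x < (k : ℝ)}) atTop (nhds (μ A)) := by
    have hU : (⋃ k : ℕ, {x ∈ A | u x < (k : ℝ)}) = A := by
      ext x
      simp only [mem_iUnion, mem_setOf_eq]
      constructor
      · rintro ⟨k, hk⟩; exact hk.1
      · intro hx
        obtain ⟨k, hk⟩ := exists_nat_gt (u x)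
        exact ⟨k, hx, hk⟩
    have := tendsto_measure_iUnion_atTop (μ := μ)
      (s := fun k : ℕ => {x ∈ A | u x < (k : ℝ)})
      (fun k k' hkk' x hx => ⟨hx.1, lt_of_lt_of_le hx.2 (Nat.cast_le.2 hkk')⟩)
    rwa [hU] at this
  obtain ⟨k, hk⟩ := (htend.eventually_const_lt hlt).exists
  refine ⟨(k : ℝ), fun M hM => ?_⟩
  by_contra hMk
  push_neg at hMk
  exact absurd (medSet_dc hMk.le hM) (not_le.2 hk)


lemma measure_le_med (hu : Measurable u) (hA : MeasurableSet A)
    (hA0 : 0 < μ A) (hAfin : μ A < ∞) (hγ0 : 0 < γ) (hγ : γ ≤ 1/2) :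
    ENNReal.ofReal γ * μ A ≤ μ {x ∈ A | u x ≤ med μ γ u A} := by
  set m := med μ γ u A with hm
  set S := {M : ℝ | μ {x ∈ A | u x < M} ≤ ENNReal.ofReal γ * μ A} with hS
  have hne := medSet_nonempty hu hA hA0 hAfin hγ0
  have hbdd := medSet_bddAbove (μ := μ) (u := u) hu hA hA0 hAfin hγ
  have hEq : {x ∈ A | u x ≤ m} = ⋂ k : ℕ, {x ∈ A | u x < m + 1/(k+1)} := by
    ext x
    simp only [mem_iInter, mem_setOf_eq]
    constructor
    · intro hx k
      refine ⟨hx.1, lt_of_le_of_lt hx.2 ?_⟩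
      have : (0:ℝ) < 1/((k:ℝ)+1) := by positivity
      linarith
    · intro h
      refine ⟨(h 0).1, ?_⟩
      by_contra hlt
      push_neg at hlt
      obtain ⟨k, hk⟩ := exists_nat_one_div_lt (sub_pos.2 hlt)
      have := (h k).2
      linarith
  have hmem : ∀ k : ℕ, ENNReal.ofReal γ * μ A ≤ μ {x ∈ A | u x < m + 1/(k+1)} := by
    intro k
    by_contra hle
    push_neg at hle
    have hmemS : (m + 1/((k:ℝ)+1)) ∈ S := hle.le
    have : m + 1/((k:ℝ)+1) ≤ m := le_csSup hbdd hmemS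
    have hk : (0:ℝ) < 1/((k:ℝ)+1) := by positivity
    linarith
  have htend := tendsto_measure_iInter_atTop (μ := μ)
      (s := fun k : ℕ => {x ∈ A | u x < m + 1/(k+1)})
      (fun k => (sub_meas hu hA _).nullMeasurableSet)
      (fun k k' hkk' x hx => ⟨hx.1, lt_of_lt_of_le hx.2 (by
        have : 1/((k':ℝ)+1) ≤ 1/((k:ℝ)+1) := by
          apply one_div_le_one_div_of_le (by positivity)
          exact_mod_cast add_le_add_left (Nat.cast_le.2 hkk') 1
        linarith)⟩)
      ⟨0, (lt_of_le_of_lt (measure_mono (fun x hx => hx.1)) hAfin).ne⟩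
  rw [hEq]
  exact ge_of_tendsto htend (Eventually.of_forall hmem)

lemma measure_lt_med (hu : Measurable u) (hA : MeasurableSet A)
    (hA0 : 0 < μ A) (hAfin : μ A < ∞) (hγ0 : 0 < γ) (hγ : γ ≤ 1/2) :
    μ {x ∈ A | u x < med μ γ u A} ≤ ENNReal.ofReal γ * μ A := by
  set m := med μ γ u A with hm
  set S := {M : ℝ | μ {x ∈ A | u x < M} ≤ ENNReal.ofReal γ * μ A} with hS
  have hne := medSet_nonempty hu hA hA0 hAfin hγ0
  have hEq : {x ∈ A | u x < m} = ⋃ k : ℕ, {x ∈ A | u x < m - 1/(k+1)} := by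
    ext x
    simp only [mem_iUnion, mem_setOf_eq]
    constructor
    · intro hx
      obtain ⟨k, hk⟩ := exists_nat_one_div_lt (sub_pos.2 hx.2)
      exact ⟨k, hx.1, by linarith⟩
    · rintro ⟨k, hk1, hk2⟩
      have : (0:ℝ) < 1/((k:ℝ)+1) := by positivity
      exact ⟨hk1, by linarith⟩
  have hmem : ∀ k : ℕ, μ {x ∈ A | u x < m - 1/(k+1)} ≤ ENNReal.ofReal γ * μ A := by
    intro k
    have hk : (0:ℝ) < 1/((k:ℝ)+1) := by positivity
    have : m - 1/((k:ℝ)+1) < m := by linarith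
    obtain ⟨a, haS, ha⟩ := exists_lt_of_lt_csSup hne this
    exact medSet_dc ha.le haS
  have htend := tendsto_measure_iUnion_atTop (μ := μ)
      (s := fun k : ℕ => {x ∈ A | u x < m - 1/(k+1)})
      (fun k k' hkk' x hx => ⟨hx.1, lt_of_lt_of_le hx.2 (by
        have : 1/((k':ℝ)+1) ≤ 1/((k:ℝ)+1) := by
          apply one_div_le_one_div_of_le (by positivity)
          exact_mod_cast add_le_add_left (Nat.cast_le.2 hkk') 1
        linarith)⟩)
  rw [hEq]
  exact le_of_tendsto htend (Eventually.of_forall hmem)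

lemma measure_med_le (hu : Measurable u) (hA : MeasurableSet A)
    (hA0 : 0 < μ A) (hAfin : μ A < ∞) (hγ0 : 0 < γ) (hγ : γ ≤ 1/2) :
    ENNReal.ofReal γ * μ A ≤ μ {x ∈ A | med μ γ u A ≤ u x} := by
  set m := med μ γ u A with hm
  have h1 : μ {x ∈ A | u x < m} ≤ ENNReal.ofReal γ * μ A :=
    measure_lt_med hu hA hA0 hAfin hγ0 hγ
  have hsplit : μ A ≤ μ {x ∈ A | u x < m} + μ {x ∈ A | m ≤ u x} := by
    refine le_trans (measure_mono ?_) (measure_union_le _ _)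
    intro x hx
    rcases lt_or_ge (u x) m with h | h
    · exact Or.inl ⟨hx, h⟩
    · exact Or.inr ⟨hx, h⟩
  have h2γ : ENNReal.ofReal γ * μ A + ENNReal.ofReal γ * μ A ≤ μ A := by
    rw [← two_mul, ← mul_assoc, show ((2:ℝ≥0∞)) = ENNReal.ofReal 2 by simp,
      ← ENNReal.ofReal_mul (by norm_num)]
    calc ENNReal.ofReal (2*γ) * μ A ≤ ENNReal.ofReal 1 * μ A := by
          refine mul_le_mul_left (ENNReal.ofReal_le_ofReal (by linarith)) _
      _ = μ A := by simp
  have hfin : ENNReal.ofReal γ * μ A ≠ ∞ :=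
    (ENNReal.mul_lt_top ENNReal.ofReal_lt_top hAfin).ne
  have : ENNReal.ofReal γ * μ A + ENNReal.ofReal γ * μ A ≤
      ENNReal.ofReal γ * μ A + μ {x ∈ A | m ≤ u x} :=
    le_trans h2γ (le_trans hsplit (add_le_add_left h1 _))
  exact (ENNReal.add_le_add_iff_left hfin).1 this

/-- The key pointwise estimate for the median. -/
lemma med_key (hu : Measurable u) (hA : MeasurableSet A)
    (hA0 : 0 < μ A) (hAfin : μ A < ∞) (hγ0 : 0 < γ) (hγ : γ ≤ 1/2)
    {p : ℝ} (hp0 : 0 < p) (x : X) :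
    ENNReal.ofReal (|u x - med μ γ u A| ^ p) * (ENNReal.ofReal γ * μ A) ≤
      ∫⁻ y in A, ENNReal.ofReal (|u x - u y| ^ p) ∂μ := by
  set m := med μ γ u A with hm
  rcases le_total (u x) m with hx | hx
  · set T := {y ∈ A | m ≤ u y} with hT
    have hTm : MeasurableSet T := hA.inter (hu measurableSet_Ici)
    have hTμ : ENNReal.ofReal γ * μ A ≤ μ T := measure_med_le hu hA hA0 hAfin hγ0 hγ
    have hpt : ∀ y ∈ T, ENNReal.ofReal (|u x - m| ^ p) ≤ ENNReal.ofReal (|u x - u y| ^ p) := by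
      intro y hy
      refine ENNReal.ofReal_le_ofReal (Real.rpow_le_rpow (abs_nonneg _) ?_ hp0.le)
      rw [abs_of_nonpos (by linarith), abs_of_nonpos (by have := hy.2; linarith)]
      have := hy.2; linarith
    calc ENNReal.ofReal (|u x - m| ^ p) * (ENNReal.ofReal γ * μ A)
        ≤ ENNReal.ofReal (|u x - m| ^ p) * μ T := mul_le_mul_right hTμ _
      _ = ∫⁻ _ in T, ENNReal.ofReal (|u x - m| ^ p) ∂μ := (setLIntegral_const _ _).symm
      _ ≤ ∫⁻ y in T, ENNReal.ofReal (|u x - u y| ^ p) ∂μ := setLIntegral_mono' hTm hpt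
      _ ≤ ∫⁻ y in A, ENNReal.ofReal (|u x - u y| ^ p) ∂μ :=
          lintegral_mono_set (fun y hy => hy.1)
  · set T := {y ∈ A | u y ≤ m} with hT
    have hTm : MeasurableSet T := hA.inter (hu measurableSet_Iic)
    have hTμ : ENNReal.ofReal γ * μ A ≤ μ T := measure_le_med hu hA hA0 hAfin hγ0 hγ
    have hpt : ∀ y ∈ T, ENNReal.ofReal (|u x - m| ^ p) ≤ ENNReal.ofReal (|u x - u y| ^ p) := by
      intro y hy
      refine ENNReal.ofReal_le_ofReal (Real.rpow_le_rpow (abs_nonneg _) ?_ hp0.le)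
      rw [abs_of_nonneg (by linarith), abs_of_nonneg (by have := hy.2; linarith)]
      have := hy.2; linarith
    calc ENNReal.ofReal (|u x - m| ^ p) * (ENNReal.ofReal γ * μ A)
        ≤ ENNReal.ofReal (|u x - m| ^ p) * μ T := mul_le_mul_right hTμ _
      _ = ∫⁻ _ in T, ENNReal.ofReal (|u x - m| ^ p) ∂μ := (setLIntegral_const _ _).symm
      _ ≤ ∫⁻ y in T, ENNReal.ofReal (|u x - u y| ^ p) ∂μ := setLIntegral_mono' hTm hpt
      _ ≤ ∫⁻ y in A, ENNReal.ofReal (|u x - u y| ^ p) ∂μ :=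
          lintegral_mono_set (fun y hy => hy.1)

end GagAux



lemma vol_ball_eq (n : ℕ) (x : EuclideanSpace ℝ (Fin n)) {r : ℝ} (hr : 0 < r) :
    volume (ball x r) =
      ENNReal.ofReal (r ^ (n:ℝ)) * volume (ball (0 : EuclideanSpace ℝ (Fin n)) 1) := by
  cases n with
  | zero =>
    haveI : Subsingleton (EuclideanSpace ℝ (Fin 0)) :=
      ⟨fun a b => by ext i; exact i.elim0⟩
    have h1 : ball x r = (univ : Set (EuclideanSpace ℝ (Fin 0))) :=
      eq_univ_of_forall fun y => by
        rw [mem_ball]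
        simpa [Subsingleton.elim y x] using hr
    have h2 : ball (0 : EuclideanSpace ℝ (Fin 0)) 1 = univ :=
      eq_univ_of_forall fun y => by
        rw [mem_ball]
        simpa [Subsingleton.elim y (0 : EuclideanSpace ℝ (Fin 0))] using one_pos
    rw [h1, h2]
    simp
  | succ k =>
    haveI : Nontrivial (EuclideanSpace ℝ (Fin (k+1))) := by
      apply Module.nontrivial_of_finrank_pos (R := ℝ)
      rw [finrank_euclideanSpace, Fintype.card_fin]
      exact Nat.succ_pos k
    rw [Measure.addHaar_ball volume x hr.le, finrank_euclideanSpace, Fintype.card_fin,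
      ← Real.rpow_natCast r (k+1)]


/-- `g(x) ≲ (∫ |u(z)-u(x)|^p/|z-x|^{n+sp} dz)^{1/p}` a.e., and consequently
`‖g‖_{L^p} ≲ ‖u‖_{W^{s,p}} < ∞`. -/
theorem gFun_le_gagliardo (n : ℕ) (s p γ : ℝ)
    (hs0 : 0 < s) (hs1 : s < 1) (hp0 : 0 < p) (hp1 : p < 1)
    (hγ0 : 0 < γ) (hγ : γ ≤ 1/2)
    (u : EuclideanSpace ℝ (Fin n) → ℝ) (humeas : Measurable u) (hu : MemWsp n s p u) :
    ∃ C : ℝ≥0∞, 0 < C ∧ C < ∞ ∧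
      (∀ᵐ x ∂(volume : Measure (EuclideanSpace ℝ (Fin n))),
        gFun n s p γ u x ≤
          C * (∫⁻ z, ENNReal.ofReal (|u z - u x| ^ p / dist z x ^ ((n : ℝ) + s * p))) ^ (1 / p)) ∧
      (∫⁻ x, (gFun n s p γ u x) ^ p) ^ (1 / p) ≤ C * wspNorm n s p u ∧
      wspNorm n s p u < ∞ := by
  have h1p : (0:ℝ) ≤ 1/p := by positivity
  set γ' : ℝ≥0∞ := ENNReal.ofReal γ with hγ'def
  have hγ'0 : 0 < γ' := ENNReal.ofReal_pos.2 hγ0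
  have hγ'top : γ' ≠ ∞ := ENNReal.ofReal_ne_top
  set c : ℝ≥0∞ := volume (ball (0 : EuclideanSpace ℝ (Fin n)) 1) with hcdef
  have hc0 : 0 < c := measure_ball_pos _ _ one_pos
  have hctop : c < ∞ := measure_ball_lt_top
  have hCbase0 : (1 + γ'⁻¹) * c⁻¹ ≠ 0 := by
    refine mul_ne_zero ?_ (ENNReal.inv_ne_zero.2 hctop.ne)
    intro h
    simp at h
  have hCbasetop : (1 + γ'⁻¹) * c⁻¹ ≠ ∞ := by
    refine ENNReal.mul_ne_top ?_ (ENNReal.inv_lt_top.2 hc0).ne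
    exact ENNReal.add_ne_top.2 ⟨ENNReal.one_ne_top, (ENNReal.inv_lt_top.2 hγ'0).ne⟩
  set C : ℝ≥0∞ := ((1 + γ'⁻¹) * c⁻¹) ^ (1/p) with hCdef
  have hC0 : 0 < C := ENNReal.rpow_pos (pos_iff_ne_zero.mpr hCbase0) hCbasetop
  have hCtop : C < ∞ := ENNReal.rpow_lt_top_of_nonneg h1p hCbasetop
  -- the main pointwise bound (for all x)
  have key : ∀ x, gFun n s p γ u x ≤
      C * (∫⁻ z, ENNReal.ofReal (|u z - u x| ^ p / dist z x ^ ((n : ℝ) + s * p))) ^ (1/p) := by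
    intro x
    set G : ℝ≥0∞ := ∫⁻ z, ENNReal.ofReal (|u z - u x| ^ p / dist z x ^ ((n : ℝ) + s * p))
      with hGdef
    rw [gFun]
    refine iSup_le fun j => ?_
    set r : ℝ := (2:ℝ) ^ (-(j:ℝ)) with hrdef
    have hr : 0 < r := Real.rpow_pos_of_pos two_pos _
    set B := ball x r with hBdef
    have hBm : MeasurableSet B := measurableSet_ball
    have hB0 : 0 < volume B := measure_ball_pos _ _ hr
    have hBfin : volume B < ∞ := measure_ball_lt_top
    set m := med volume γ u B with hmdef
    set J := ∫⁻ z in B, ENNReal.ofReal (|u z - u x| ^ p) with hJdef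
    have hmed := GagAux.med_key humeas hBm hB0 hBfin hγ0 hγ hp0 x
    have hmed' : ENNReal.ofReal (|u x - m| ^ p) * volume B ≤ γ'⁻¹ * J := by
      have h1 : (∫⁻ y in B, ENNReal.ofReal (|u x - u y| ^ p)) = J := by
        rw [hJdef]; exact lintegral_congr fun z => by rw [abs_sub_comm]
      calc ENNReal.ofReal (|u x - m| ^ p) * volume B
          = ENNReal.ofReal (|u x - m| ^ p) * (γ' * volume B) * γ'⁻¹ := by
            rw [mul_assoc, mul_comm γ' (volume B), mul_assoc,
              ENNReal.mul_inv_cancel hγ'0.ne' hγ'top, mul_one]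
        _ ≤ (∫⁻ y in B, ENNReal.ofReal (|u x - u y| ^ p)) * γ'⁻¹ := mul_le_mul_left hmed _
        _ = γ'⁻¹ * J := by rw [h1, mul_comm]
    have hsplit : (∫⁻ z in B, ENNReal.ofReal (|u z - m| ^ p)) ≤ (1 + γ'⁻¹) * J := by
      have hpt : ∀ z, ENNReal.ofReal (|u z - m| ^ p) ≤
          ENNReal.ofReal (|u z - u x| ^ p) + ENNReal.ofReal (|u x - m| ^ p) := by
        intro z
        rw [← ENNReal.ofReal_rpow_of_nonneg (abs_nonneg _) hp0.le,
            ← ENNReal.ofReal_rpow_of_nonneg (abs_nonneg (u z - u x)) hp0.le,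
            ← ENNReal.ofReal_rpow_of_nonneg (abs_nonneg (u x - m)) hp0.le]
        calc ENNReal.ofReal |u z - m| ^ p
            ≤ (ENNReal.ofReal |u z - u x| + ENNReal.ofReal |u x - m|) ^ p := by
              refine ENNReal.rpow_le_rpow ?_ hp0.le
              rw [← ENNReal.ofReal_add (abs_nonneg _) (abs_nonneg _)]
              exact ENNReal.ofReal_le_ofReal (abs_sub_le _ _ _)
          _ ≤ _ := ENNReal.rpow_add_le_add_rpow _ _ hp0.le hp1.le
      calc (∫⁻ z in B, ENNReal.ofReal (|u z - m| ^ p))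
          ≤ ∫⁻ z in B, (ENNReal.ofReal (|u z - u x| ^ p) + ENNReal.ofReal (|u x - m| ^ p)) :=
            lintegral_mono fun z => hpt z
        _ = J + ENNReal.ofReal (|u x - m| ^ p) * volume B := by
            rw [lintegral_add_right _ measurable_const, setLIntegral_const, hJdef]
        _ ≤ J + γ'⁻¹ * J := add_le_add_right hmed' _
        _ = (1 + γ'⁻¹) * J := by rw [add_mul, one_mul]
    have hJle : J ≤ ENNReal.ofReal (r ^ ((n:ℝ) + s*p)) * G := by
      have hpt : ∀ z ∈ B, ENNReal.ofReal (|u z - u x| ^ p) ≤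
          ENNReal.ofReal (r ^ ((n:ℝ) + s*p)) *
            ENNReal.ofReal (|u z - u x| ^ p / dist z x ^ ((n:ℝ) + s*p)) := by
        intro z hz
        rw [← ENNReal.ofReal_mul (Real.rpow_nonneg hr.le _)]
        refine ENNReal.ofReal_le_ofReal ?_
        rcases eq_or_lt_of_le (dist_nonneg (x := z) (y := x)) with hd | hd
        · have hzx : z = x := dist_eq_zero.1 hd.symm
          rw [hzx, sub_self, abs_zero, Real.zero_rpow hp0.ne']
          positivity
        · have hdr : dist z x ≤ r := (mem_ball.1 hz).le
          have hexp : (0:ℝ) ≤ (n:ℝ) + s*p := by positivity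
          have hpow : dist z x ^ ((n:ℝ)+s*p) ≤ r ^ ((n:ℝ)+s*p) :=
            Real.rpow_le_rpow dist_nonneg hdr hexp
          have hd0 : (0:ℝ) < dist z x ^ ((n:ℝ)+s*p) := Real.rpow_pos_of_pos hd _
          calc |u z - u x| ^ p
              = |u z - u x| ^ p / dist z x ^ ((n:ℝ)+s*p) * dist z x ^ ((n:ℝ)+s*p) :=
                (div_mul_cancel₀ _ hd0.ne').symm
            _ ≤ |u z - u x| ^ p / dist z x ^ ((n:ℝ)+s*p) * r ^ ((n:ℝ)+s*p) := by
                refine mul_le_mul_of_nonneg_left hpow ?_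
                positivity
            _ = r ^ ((n:ℝ)+s*p) * (|u z - u x| ^ p / dist z x ^ ((n:ℝ)+s*p)) := mul_comm _ _
      calc J ≤ ∫⁻ z in B, ENNReal.ofReal (r ^ ((n:ℝ)+s*p)) *
            ENNReal.ofReal (|u z - u x| ^ p / dist z x ^ ((n:ℝ)+s*p)) :=
            setLIntegral_mono' hBm hpt
        _ = ENNReal.ofReal (r ^ ((n:ℝ)+s*p)) *
            ∫⁻ z in B, ENNReal.ofReal (|u z - u x| ^ p / dist z x ^ ((n:ℝ)+s*p)) :=
            lintegral_const_mul' _ _ ENNReal.ofReal_ne_top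
        _ ≤ ENNReal.ofReal (r ^ ((n:ℝ)+s*p)) * G :=
            mul_le_mul_right (setLIntegral_le_lintegral _ _) _
    have hr_n0 : ENNReal.ofReal (r ^ (n:ℝ)) ≠ 0 :=
      (ENNReal.ofReal_pos.2 (Real.rpow_pos_of_pos hr _)).ne'
    have hvol : volume B = ENNReal.ofReal (r ^ (n:ℝ)) * c := vol_ball_eq n x hr
    have hrs : (ENNReal.ofReal (r ^ (n:ℝ)))⁻¹ * ENNReal.ofReal (r ^ ((n:ℝ)+s*p)) =
        ENNReal.ofReal (r ^ (s*p)) := by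
      rw [Real.rpow_add hr, ENNReal.ofReal_mul (Real.rpow_nonneg hr.le _), ← mul_assoc,
        ENNReal.inv_mul_cancel hr_n0 ENNReal.ofReal_ne_top, one_mul]
    have hmono : (volume B)⁻¹ * (∫⁻ z in B, ENNReal.ofReal (|u z - m| ^ p)) ≤
        ENNReal.ofReal (r ^ (s*p)) * (((1 + γ'⁻¹) * c⁻¹) * G) := by
      calc (volume B)⁻¹ * (∫⁻ z in B, ENNReal.ofReal (|u z - m| ^ p))
          ≤ (volume B)⁻¹ * ((1 + γ'⁻¹) * (ENNReal.ofReal (r ^ ((n:ℝ)+s*p)) * G)) :=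
            mul_le_mul_right (le_trans hsplit (mul_le_mul_right hJle _)) _
        _ = ENNReal.ofReal (r ^ (s*p)) * (((1 + γ'⁻¹) * c⁻¹) * G) := by
            rw [hvol, ENNReal.mul_inv (Or.inl hr_n0) (Or.inl ENNReal.ofReal_ne_top), ← hrs]
            ring
    have hpow_eq : (ENNReal.ofReal (r ^ (s*p))) ^ (1/p) = ENNReal.ofReal (r ^ s) := by
      rw [ENNReal.ofReal_rpow_of_pos (Real.rpow_pos_of_pos hr _), ← Real.rpow_mul hr.le]
      congr 1
      field_simp
    have h2js : ENNReal.ofReal ((2:ℝ) ^ ((j:ℝ)*s)) * ENNReal.ofReal (r ^ s) = 1 := by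
      rw [hrdef, ← Real.rpow_mul (by norm_num : (0:ℝ) ≤ 2),
        ← ENNReal.ofReal_mul (Real.rpow_nonneg (by norm_num) _),
        ← Real.rpow_add two_pos, show (j:ℝ)*s + -(j:ℝ)*s = 0 by ring, Real.rpow_zero,
        ENNReal.ofReal_one]
    calc ENNReal.ofReal ((2:ℝ) ^ ((j:ℝ)*s)) *
          ((volume B)⁻¹ * ∫⁻ z in B, ENNReal.ofReal (|u z - m| ^ p)) ^ (1/p)
        ≤ ENNReal.ofReal ((2:ℝ) ^ ((j:ℝ)*s)) *
          (ENNReal.ofReal (r ^ (s*p)) * (((1 + γ'⁻¹) * c⁻¹) * G)) ^ (1/p) :=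
          mul_le_mul_right (ENNReal.rpow_le_rpow hmono h1p) _
      _ = (ENNReal.ofReal ((2:ℝ) ^ ((j:ℝ)*s)) * ENNReal.ofReal (r ^ s)) *
          (((1 + γ'⁻¹) * c⁻¹) ^ (1/p) * G ^ (1/p)) := by
          rw [ENNReal.mul_rpow_of_nonneg _ _ h1p, ENNReal.mul_rpow_of_nonneg _ _ h1p, hpow_eq]
          ring
      _ = C * G ^ (1/p) := by rw [h2js, one_mul, hCdef]
  -- the L^p bound
  have hCp_netop : C ^ p ≠ ∞ := (ENNReal.rpow_lt_top_of_nonneg hp0.le hCtop.ne).ne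
  have hD_eq : (∫⁻ x, ∫⁻ z, ENNReal.ofReal (|u z - u x| ^ p / dist z x ^ ((n : ℝ) + s * p))) =
      ∫⁻ x, ∫⁻ y, ENNReal.ofReal (|u x - u y| ^ p / dist x y ^ ((n : ℝ) + s * p)) :=
    lintegral_congr fun x => lintegral_congr fun z => by rw [abs_sub_comm, dist_comm]
  have hlp_aux : (∫⁻ x, (gFun n s p γ u x) ^ p) ≤
      C ^ p * ∫⁻ x, ∫⁻ y, ENNReal.ofReal (|u x - u y| ^ p / dist x y ^ ((n : ℝ) + s * p)) := by
    calc (∫⁻ x, (gFun n s p γ u x) ^ p)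
        ≤ ∫⁻ x, C ^ p *
            ∫⁻ z, ENNReal.ofReal (|u z - u x| ^ p / dist z x ^ ((n : ℝ) + s * p)) := by
          refine lintegral_mono fun x => ?_
          calc (gFun n s p γ u x) ^ p
              ≤ (C * (∫⁻ z, ENNReal.ofReal
                  (|u z - u x| ^ p / dist z x ^ ((n : ℝ) + s * p))) ^ (1/p)) ^ p :=
                ENNReal.rpow_le_rpow (key x) hp0.le
            _ = C ^ p * ∫⁻ z, ENNReal.ofReal (|u z - u x| ^ p / dist z x ^ ((n : ℝ) + s * p)) := by
                rw [ENNReal.mul_rpow_of_nonneg _ _ hp0.le]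
                simp only [← ENNReal.rpow_mul, one_div_mul_cancel hp0.ne', ENNReal.rpow_one]
      _ = C ^ p * ∫⁻ x, ∫⁻ z, ENNReal.ofReal (|u z - u x| ^ p / dist z x ^ ((n : ℝ) + s * p)) :=
          lintegral_const_mul' _ _ hCp_netop
      _ = C ^ p * ∫⁻ x, ∫⁻ y, ENNReal.ofReal (|u x - u y| ^ p / dist x y ^ ((n : ℝ) + s * p)) := by
          rw [hD_eq]
  have hlp : (∫⁻ x, (gFun n s p γ u x) ^ p) ^ (1/p) ≤ C * wspNorm n s p u := by
    calc (∫⁻ x, (gFun n s p γ u x) ^ p) ^ (1/p)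
        ≤ (C ^ p * ∫⁻ x, ∫⁻ y,
            ENNReal.ofReal (|u x - u y| ^ p / dist x y ^ ((n : ℝ) + s * p))) ^ (1/p) :=
          ENNReal.rpow_le_rpow hlp_aux h1p
      _ = C * (∫⁻ x, ∫⁻ y,
            ENNReal.ofReal (|u x - u y| ^ p / dist x y ^ ((n : ℝ) + s * p))) ^ (1/p) := by
          rw [ENNReal.mul_rpow_of_nonneg _ _ h1p, ← ENNReal.rpow_mul,
            mul_one_div_cancel hp0.ne', ENNReal.rpow_one]
      _ ≤ C * wspNorm n s p u := by
          rw [wspNorm]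
          exact mul_le_mul_right (ENNReal.rpow_le_rpow le_add_self h1p) _
  -- finiteness of the W^{s,p} norm
  have hAfin : (∫⁻ x, ENNReal.ofReal (|u x| ^ p)) < ∞ := by
    have h := hu.1.2
    rw [eLpNorm_eq_lintegral_rpow_enorm_toReal (ENNReal.ofReal_pos.2 hp0).ne' ENNReal.ofReal_ne_top,
      ENNReal.toReal_ofReal hp0.le] at h
    have h2 := (ENNReal.rpow_lt_top_iff_of_pos (by positivity : (0:ℝ) < 1/p)).1 h
    have h3 : (∫⁻ x, ‖u x‖ₑ ^ p) = ∫⁻ x, ENNReal.ofReal (|u x| ^ p) :=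
      lintegral_congr fun x => by
        rw [Real.enorm_eq_ofReal_abs, ENNReal.ofReal_rpow_of_nonneg (abs_nonneg _) hp0.le]
    rwa [h3] at h2
  have hwsp : wspNorm n s p u < ∞ := by
    rw [wspNorm]
    refine ENNReal.rpow_lt_top_of_nonneg h1p ?_
    exact (ENNReal.add_lt_top.2 ⟨hAfin, hu.2⟩).ne
  exact ⟨C, hC0, hCtop, Eventually.of_forall key, hlp, hwsp⟩
end

section
/- Let s,p ∈ (0,1), n ∈ ℕ, 0<γ≤1/2, and let u be a measurable, almost everywhere finite function on ℝ^n. Then there is a constant C (depending only on n, p, γ) such that for every j ∈ ℕ and every x ∈ ℝ^n at which u(x) is finite, ⨍_{B(x,2^{−j})} |u(z) − m_u^γ(B(x,2^{−j}))|^p dz ≤ C·2^{−jsp}·∫_{B(x,2^{−j})} |u(z)−u(x)|^p/|z−x|^{n+sp} dz. -/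
open MeasureTheory Metric Set Filter ENNReal

/-- for every `j` and `x`,
`⨍_{B(x,2^{-j})} |u(z) - m_u^γ(B(x,2^{-j}))|^p dz ≤ C 2^{-jsp} ∫_{B(x,2^{-j})} |u(z)-u(x)|^p/|z-x|^{n+sp} dz`. -/
theorem average_dist_median_le (n : ℕ) (s p γ : ℝ)
    (hs0 : 0 < s) (hs1 : s < 1) (hp0 : 0 < p) (hp1 : p < 1)
    (hγ0 : 0 < γ) (hγ : γ ≤ 1/2)
    (u : EuclideanSpace ℝ (Fin n) → ℝ) (humeas : Measurable u) :
    ∃ C : ℝ, 0 < C ∧ ∀ (j : ℕ) (x : EuclideanSpace ℝ (Fin n)),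
      (volume (ball x ((2:ℝ) ^ (-(j : ℝ)))))⁻¹ *
        ∫⁻ z in ball x ((2:ℝ) ^ (-(j : ℝ))),
          ENNReal.ofReal (|u z - med volume γ u (ball x ((2:ℝ) ^ (-(j : ℝ))))| ^ p) ≤
      ENNReal.ofReal (C * (2:ℝ) ^ (-(j : ℝ) * s * p)) *
        ∫⁻ z in ball x ((2:ℝ) ^ (-(j : ℝ))),
          ENNReal.ofReal (|u z - u x| ^ p / dist z x ^ ((n : ℝ) + s * p)) := by
  classical
  set ν : ℝ≥0∞ := volume (ball (0 : EuclideanSpace ℝ (Fin n)) 1) with hνdef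
  have hν0 : ν ≠ 0 := (measure_ball_pos _ _ one_pos).ne'
  have hνtop : ν ≠ ∞ := measure_ball_lt_top.ne
  have hνreal : 0 < ν.toReal := ENNReal.toReal_pos hν0 hνtop
  refine ⟨(1 + γ⁻¹) * ν.toReal⁻¹, by positivity, ?_⟩
  intro j x
  set r : ℝ := (2:ℝ) ^ (-(j:ℝ)) with hrdef
  have hr : 0 < r := Real.rpow_pos_of_pos two_pos _
  set A : Set (EuclideanSpace ℝ (Fin n)) := ball x r with hAdef
  have hAmeas : MeasurableSet A := measurableSet_ball
  have hA0 : volume A ≠ 0 := (measure_ball_pos _ _ hr).ne'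
  have hAtop : volume A ≠ ∞ := measure_ball_lt_top.ne
  set c : ℝ := u x with hcdef
  set J := ∫⁻ z in A, ENNReal.ofReal (|u z - c| ^ p / dist z x ^ ((n:ℝ) + s * p)) with hJdef
  have hCpos : (0:ℝ) < (1 + γ⁻¹) * ν.toReal⁻¹ * (2:ℝ) ^ (-(j:ℝ) * s * p) := by positivity
  by_cases hJtop : J = ∞
  · rw [hJtop, ENNReal.mul_top (ENNReal.ofReal_pos.mpr hCpos).ne']
    exact le_top
  have hnsp : (0:ℝ) < (n:ℝ) + s * p := by positivity
  set I := ∫⁻ z in A, ENNReal.ofReal (|u z - c| ^ p) with hIdef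
  have hIJ : I ≤ ENNReal.ofReal (r ^ ((n:ℝ) + s * p)) * J := by
    have hrwJ : ENNReal.ofReal (r ^ ((n:ℝ) + s * p)) * J =
        ∫⁻ z in A, ENNReal.ofReal (r ^ ((n:ℝ) + s * p)) *
          ENNReal.ofReal (|u z - c| ^ p / dist z x ^ ((n:ℝ) + s * p)) := by
      rw [hJdef, ← lintegral_const_mul' _ _ ENNReal.ofReal_ne_top]
    rw [hrwJ, hIdef]
    refine setLIntegral_mono' hAmeas fun z hz => ?_
    rcases eq_or_ne z x with rfl | hzx
    · simp [hcdef, Real.zero_rpow hp0.ne']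
    · have hd0 : 0 < dist z x := dist_pos.mpr hzx
      have hdr : dist z x < r := mem_ball.mp hz
      have h1 : dist z x ^ ((n:ℝ) + s * p) ≤ r ^ ((n:ℝ) + s * p) :=
        Real.rpow_le_rpow hd0.le hdr.le hnsp.le
      have hdp : (0:ℝ) < dist z x ^ ((n:ℝ) + s * p) := Real.rpow_pos_of_pos hd0 _
      rw [← ENNReal.ofReal_mul (by positivity)]
      apply ENNReal.ofReal_le_ofReal
      calc |u z - c| ^ p
          = (|u z - c| ^ p / dist z x ^ ((n:ℝ) + s * p)) * dist z x ^ ((n:ℝ) + s * p) := by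
            field_simp
        _ ≤ (|u z - c| ^ p / dist z x ^ ((n:ℝ) + s * p)) * r ^ ((n:ℝ) + s * p) := by
            apply mul_le_mul_of_nonneg_left h1 (by positivity)
        _ = r ^ ((n:ℝ) + s * p) * (|u z - c| ^ p / dist z x ^ ((n:ℝ) + s * p)) := mul_comm _ _
  have hIne : I ≠ ∞ := ne_top_of_le_ne_top (ENNReal.mul_ne_top ENNReal.ofReal_ne_top hJtop) hIJ
  -- median machinery
  set S : Set ℝ := {M : ℝ | volume {z ∈ A | u z < M} ≤ ENNReal.ofReal γ * volume A} with hSdef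
  have hmedS : med volume γ u A = sSup S := rfl
  have hγ0' : ENNReal.ofReal γ ≠ 0 := (ENNReal.ofReal_pos.mpr hγ0).ne'
  have hD0 : ENNReal.ofReal γ * volume A ≠ 0 := mul_ne_zero hγ0' hA0
  have hDtop : ENNReal.ofReal γ * volume A ≠ ∞ := ENNReal.mul_ne_top ENNReal.ofReal_ne_top hAtop
  have hsetmeas : ∀ M : ℝ, MeasurableSet {z ∈ A | u z < M} := fun M =>
    hAmeas.inter (humeas measurableSet_Iio)
  have hSne : S.Nonempty := by
    have hmono : Antitone (fun k : ℕ => {z ∈ A | u z < -(k:ℝ)}) := by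
      intro a b hab z hz
      refine ⟨hz.1, lt_of_lt_of_le hz.2 ?_⟩
      have : (a:ℝ) ≤ (b:ℝ) := by exact_mod_cast hab
      linarith
    have hempty : (⋂ k : ℕ, {z ∈ A | u z < -(k:ℝ)}) = (∅ : Set (EuclideanSpace ℝ (Fin n))) := by
      ext z
      simp only [mem_iInter, mem_empty_iff_false, iff_false, not_forall]
      obtain ⟨k, hk⟩ := exists_nat_ge (-u z)
      exact ⟨k, fun h => absurd h.2 (by push_neg; linarith)⟩
    have htend := tendsto_measure_iInter_atTop (μ := volume)
      (fun k => (hsetmeas _).nullMeasurableSet) hmono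
      ⟨0, ne_top_of_le_ne_top hAtop (measure_mono fun z hz => hz.1)⟩
    rw [hempty, measure_empty] at htend
    have hpos : (0:ℝ≥0∞) < ENNReal.ofReal γ * volume A := pos_iff_ne_zero.mpr hD0
    obtain ⟨k, hk⟩ := (htend.eventually_lt_const hpos).exists
    exact ⟨-(k:ℝ), hk.le⟩
  have hbdd : BddAbove S := by
    have hmono : Monotone (fun k : ℕ => {z ∈ A | u z < (k:ℝ)}) := by
      intro a b hab z hz
      refine ⟨hz.1, lt_of_lt_of_le hz.2 ?_⟩
      exact_mod_cast hab
    have hunion : (⋃ k : ℕ, {z ∈ A | u z < (k:ℝ)}) = A := by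
      ext z
      simp only [mem_iUnion]
      constructor
      · rintro ⟨k, hk⟩; exact hk.1
      · intro hz
        obtain ⟨k, hk⟩ := exists_nat_gt (u z)
        exact ⟨k, hz, hk⟩
    have htend := tendsto_measure_iUnion_atTop (μ := volume) hmono
    rw [hunion] at htend
    have h1 : ENNReal.ofReal γ < 1 := by
      rw [← ENNReal.ofReal_one]
      exact (ENNReal.ofReal_lt_ofReal_iff one_pos).mpr (by linarith)
    have hlt : ENNReal.ofReal γ * volume A < volume A := by
      conv_rhs => rw [← one_mul (volume A)]
      exact (ENNReal.mul_lt_mul_iff_left hA0 hAtop).mpr h1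
    obtain ⟨k, hk⟩ := (htend.eventually_const_lt hlt).exists
    refine ⟨(k:ℝ), fun M hM => ?_⟩
    by_contra hkM
    push_neg at hkM
    have hsub2 : {z ∈ A | u z < (k:ℝ)} ⊆ {z ∈ A | u z < M} := fun z hz =>
      ⟨hz.1, hz.2.trans hkM⟩
    have hle : volume {z ∈ A | u z < (k:ℝ)} ≤ ENNReal.ofReal γ * volume A :=
      le_trans (measure_mono hsub2) hM
    exact absurd hle (not_le.mpr hk)
  have cheb : ∀ t : ℝ, 0 < t →
      ENNReal.ofReal (t ^ p) * volume {z ∈ A | t ≤ |u z - c|} ≤ I := by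
    intro t ht
    have hEmeas : MeasurableSet {z ∈ A | t ≤ |u z - c|} :=
      hAmeas.inter (((humeas.sub measurable_const).abs) measurableSet_Ici)
    calc ENNReal.ofReal (t ^ p) * volume {z ∈ A | t ≤ |u z - c|}
        = ∫⁻ _ in {z ∈ A | t ≤ |u z - c|}, ENNReal.ofReal (t ^ p) ∂volume :=
          (setLIntegral_const _ _).symm
      _ ≤ ∫⁻ z in {z ∈ A | t ≤ |u z - c|}, ENNReal.ofReal (|u z - c| ^ p) ∂volume :=
          setLIntegral_mono' hEmeas fun z hz =>
            ENNReal.ofReal_le_ofReal (Real.rpow_le_rpow ht.le hz.2 hp0.le)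
      _ ≤ I := lintegral_mono_set fun z hz => hz.1
  have key : ∀ t : ℝ, 0 < t → t < |med volume γ u A - c| →
      ENNReal.ofReal (t ^ p) * (ENNReal.ofReal γ * volume A) ≤ I := by
    intro t ht hT
    have htriv : ENNReal.ofReal γ * volume A ≤ volume {z ∈ A | t ≤ |u z - c|} := by
      rcases lt_abs.mp hT with h1 | h1
      · obtain ⟨M, hMS, hMgt⟩ := exists_lt_of_lt_csSup hSne
          (show c + t < sSup S by rw [← hmedS]; linarith)
        have hsub1 : {z ∈ A | u z ≤ c + t} ⊆ {z ∈ A | u z < M} := fun z hz =>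
          ⟨hz.1, lt_of_le_of_lt hz.2 hMgt⟩
        have hsub : volume {z ∈ A | u z ≤ c + t} ≤ ENNReal.ofReal γ * volume A :=
          le_trans (measure_mono hsub1) hMS
        have hcover : A ⊆ {z ∈ A | u z ≤ c + t} ∪ {z ∈ A | t ≤ |u z - c|} := by
          intro z hz
          rcases le_or_gt (u z) (c + t) with h | h
          · exact Or.inl ⟨hz, h⟩
          · exact Or.inr ⟨hz, le_trans (by linarith) (le_abs_self (u z - c))⟩
        by_contra hcon
        push_neg at hcon
        have hAle : volume A ≤ volume {z ∈ A | u z ≤ c + t} + volume {z ∈ A | t ≤ |u z - c|} :=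
          le_trans (measure_mono hcover) (measure_union_le _ _)
        have h2γ : ENNReal.ofReal γ * volume A + ENNReal.ofReal γ * volume A ≤ volume A := by
          rw [← add_mul, ← ENNReal.ofReal_add hγ0.le hγ0.le]
          calc ENNReal.ofReal (γ + γ) * volume A ≤ 1 * volume A := by
                apply mul_le_mul_left
                rw [← ENNReal.ofReal_one]
                exact ENNReal.ofReal_le_ofReal (by linarith)
            _ = volume A := one_mul _
        have habs : volume A < volume A :=
          lt_of_le_of_lt (le_trans hAle (add_le_add_left hsub _))
            (lt_of_lt_of_le (ENNReal.add_lt_add_left hDtop hcon) h2γ)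
        exact absurd habs (lt_irrefl _)
      · have hmlt : med volume γ u A < c - t := by linarith
        have hnotin : c - t ∉ S := by
          intro hin
          have hle := le_csSup hbdd hin
          rw [← hmedS] at hle
          linarith
        have hgt : ENNReal.ofReal γ * volume A < volume {z ∈ A | u z < c - t} := by
          by_contra hcon
          push_neg at hcon
          exact hnotin hcon
        refine le_trans hgt.le (measure_mono fun z hz => ⟨hz.1, ?_⟩)
        have h2 : u z - c < -t := by linarith [hz.2]
        calc t ≤ -(u z - c) := by linarith
          _ ≤ |u z - c| := neg_le_abs _
    exact le_trans (mul_le_mul_right htriv _) (cheb t ht)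
  have medbound : ENNReal.ofReal (|med volume γ u A - c| ^ p) *
      (ENNReal.ofReal γ * volume A) ≤ I := by
    rcases (abs_nonneg (med volume γ u A - c)).eq_or_lt with h0 | hTpos
    · rw [← h0, Real.zero_rpow hp0.ne', ENNReal.ofReal_zero, zero_mul]
      exact zero_le
    · set K := (I / (ENNReal.ofReal γ * volume A)).toReal with hKdef
      have hKeq : I / (ENNReal.ofReal γ * volume A) = ENNReal.ofReal K := by
        rw [hKdef, ENNReal.ofReal_toReal]
        exact (ENNReal.div_lt_top hIne hD0).ne
      have hstep : ∀ t : ℝ, 0 < t → t < |med volume γ u A - c| → t ≤ K ^ (1/p) := by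
        intro t ht htT
        have h1 := key t ht htT
        have h2 : ENNReal.ofReal (t ^ p) ≤ I / (ENNReal.ofReal γ * volume A) :=
          (ENNReal.le_div_iff_mul_le (Or.inl hD0) (Or.inl hDtop)).mpr h1
        rw [hKeq] at h2
        have h3 : t ^ p ≤ K := (ENNReal.ofReal_le_ofReal_iff ENNReal.toReal_nonneg).mp h2
        calc t = (t ^ p) ^ (1/p) := by
              rw [one_div, Real.rpow_rpow_inv ht.le hp0.ne']
          _ ≤ K ^ (1/p) := Real.rpow_le_rpow (by positivity) h3 (by positivity)
      have hTK : |med volume γ u A - c| ≤ K ^ (1/p) := by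
        by_contra hcc
        push_neg at hcc
        have hK0 : (0:ℝ) ≤ K ^ (1/p) := Real.rpow_nonneg ENNReal.toReal_nonneg _
        have h1 : K ^ (1/p) < (K ^ (1/p) + |med volume γ u A - c|) / 2 := by linarith
        have h2 : (K ^ (1/p) + |med volume γ u A - c|) / 2 < |med volume γ u A - c| := by
          linarith
        have h0t : 0 < (K ^ (1/p) + |med volume γ u A - c|) / 2 := by linarith
        exact absurd (hstep _ h0t h2) (not_le.mpr h1)
      have hTpK : |med volume γ u A - c| ^ p ≤ K := by
        calc |med volume γ u A - c| ^ p ≤ (K ^ (1/p)) ^ p :=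
              Real.rpow_le_rpow (abs_nonneg _) hTK hp0.le
          _ = K := by rw [one_div, Real.rpow_inv_rpow ENNReal.toReal_nonneg hp0.ne']
      calc ENNReal.ofReal (|med volume γ u A - c| ^ p) * (ENNReal.ofReal γ * volume A)
          ≤ ENNReal.ofReal K * (ENNReal.ofReal γ * volume A) :=
            mul_le_mul_left (ENNReal.ofReal_le_ofReal hTpK) _
        _ = I / (ENNReal.ofReal γ * volume A) * (ENNReal.ofReal γ * volume A) := by
            rw [hKeq]
        _ = I := ENNReal.div_mul_cancel hD0 hDtop
  have hmain : (∫⁻ z in A, ENNReal.ofReal (|u z - med volume γ u A| ^ p)) ≤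
      I + ENNReal.ofReal (|med volume γ u A - c| ^ p) * volume A := by
    have hptwise : ∀ z, ENNReal.ofReal (|u z - med volume γ u A| ^ p) ≤
        ENNReal.ofReal (|u z - c| ^ p) + ENNReal.ofReal (|med volume γ u A - c| ^ p) := by
      intro z
      have htri : |u z - med volume γ u A| ≤ |u z - c| + |med volume γ u A - c| := by
        have h := abs_sub_le (u z) c (med volume γ u A)
        rwa [abs_sub_comm c (med volume γ u A)] at h
      calc ENNReal.ofReal (|u z - med volume γ u A| ^ p)
          ≤ ENNReal.ofReal ((|u z - c| + |med volume γ u A - c|) ^ p) :=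
            ENNReal.ofReal_le_ofReal (Real.rpow_le_rpow (abs_nonneg _) htri hp0.le)
        _ = (ENNReal.ofReal (|u z - c| + |med volume γ u A - c|)) ^ p :=
            (ENNReal.ofReal_rpow_of_nonneg (by positivity) hp0.le).symm
        _ = (ENNReal.ofReal |u z - c| + ENNReal.ofReal |med volume γ u A - c|) ^ p := by
            rw [ENNReal.ofReal_add (abs_nonneg _) (abs_nonneg _)]
        _ ≤ (ENNReal.ofReal |u z - c|) ^ p + (ENNReal.ofReal |med volume γ u A - c|) ^ p :=
            ENNReal.rpow_add_le_add_rpow _ _ hp0.le hp1.le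
        _ = _ := by
            rw [← ENNReal.ofReal_rpow_of_nonneg (abs_nonneg (u z - c)) hp0.le,
              ← ENNReal.ofReal_rpow_of_nonneg (abs_nonneg (med volume γ u A - c)) hp0.le]
    calc (∫⁻ z in A, ENNReal.ofReal (|u z - med volume γ u A| ^ p))
        ≤ ∫⁻ z in A, (ENNReal.ofReal (|u z - c| ^ p) +
            ENNReal.ofReal (|med volume γ u A - c| ^ p)) ∂volume :=
          lintegral_mono fun z => hptwise z
      _ = I + ENNReal.ofReal (|med volume γ u A - c| ^ p) * volume A := by
          rw [lintegral_add_right _ measurable_const, setLIntegral_const]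
  have hmedterm : ENNReal.ofReal (|med volume γ u A - c| ^ p) * volume A ≤
      ENNReal.ofReal γ⁻¹ * I := by
    have heq : ENNReal.ofReal (|med volume γ u A - c| ^ p) * volume A =
        (ENNReal.ofReal γ)⁻¹ * (ENNReal.ofReal (|med volume γ u A - c| ^ p) *
          (ENNReal.ofReal γ * volume A)) := by
      have h2 : (ENNReal.ofReal γ)⁻¹ * (ENNReal.ofReal (|med volume γ u A - c| ^ p) *
          (ENNReal.ofReal γ * volume A)) = ((ENNReal.ofReal γ)⁻¹ * ENNReal.ofReal γ) *
          (ENNReal.ofReal (|med volume γ u A - c| ^ p) * volume A) := by ring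
      rw [h2, ENNReal.inv_mul_cancel hγ0' ENNReal.ofReal_ne_top, one_mul]
    rw [ENNReal.ofReal_inv_of_pos hγ0, heq]
    exact mul_le_mul_right medbound _
  have htotal : (∫⁻ z in A, ENNReal.ofReal (|u z - med volume γ u A| ^ p)) ≤
      ENNReal.ofReal (1 + γ⁻¹) * I := by
    calc (∫⁻ z in A, ENNReal.ofReal (|u z - med volume γ u A| ^ p))
        ≤ I + ENNReal.ofReal (|med volume γ u A - c| ^ p) * volume A := hmain
      _ ≤ I + ENNReal.ofReal γ⁻¹ * I := add_le_add_right hmedterm _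
      _ = (1 + ENNReal.ofReal γ⁻¹) * I := by ring
      _ = ENNReal.ofReal (1 + γ⁻¹) * I := by
          rw [ENNReal.ofReal_add zero_le_one (inv_nonneg.mpr hγ0.le), ENNReal.ofReal_one]
  have hμA : volume A = ENNReal.ofReal (r ^ n) * ν := by
    rcases Nat.eq_zero_or_pos n with hn | hn
    · subst hn
      have hsub : Subsingleton (EuclideanSpace ℝ (Fin 0)) := inferInstance
      have h1 : A = univ := eq_univ_of_forall fun z => by
        rw [hAdef, mem_ball, Subsingleton.elim z x, dist_self]; exact hr
      have h2 : ball (0 : EuclideanSpace ℝ (Fin 0)) 1 = univ := eq_univ_of_forall fun z => by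
        rw [mem_ball, Subsingleton.elim z 0, dist_self]; norm_num
      rw [h1, hνdef, h2, pow_zero, ENNReal.ofReal_one, one_mul]
    · haveI : Nontrivial (EuclideanSpace ℝ (Fin n)) := by
        apply Module.nontrivial_of_finrank_pos (R := ℝ)
        rw [finrank_euclideanSpace_fin]
        exact hn
      have h := Measure.addHaar_ball (μ := volume) x hr.le
      rw [finrank_euclideanSpace_fin] at h
      rw [hAdef, h, hνdef]
  have hrn0 : ENNReal.ofReal (r ^ n) ≠ 0 := (ENNReal.ofReal_pos.mpr (by positivity)).ne'
  have hrnt : ENNReal.ofReal (r ^ n) ≠ ∞ := ENNReal.ofReal_ne_top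
  have hre : ENNReal.ofReal (r ^ ((n:ℝ) + s * p)) =
      ENNReal.ofReal (r ^ n) * ENNReal.ofReal (r ^ (s * p)) := by
    rw [← ENNReal.ofReal_mul (by positivity)]
    congr 1
    rw [Real.rpow_add hr, Real.rpow_natCast]
  have hrsp : r ^ (s * p) = (2:ℝ) ^ (-(j:ℝ) * s * p) := by
    rw [hrdef, ← Real.rpow_mul (by norm_num : (0:ℝ) ≤ 2)]
    ring_nf
  have hcoef : (volume A)⁻¹ * (ENNReal.ofReal (1 + γ⁻¹) *
      ENNReal.ofReal (r ^ ((n:ℝ) + s * p))) =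
      ENNReal.ofReal ((1 + γ⁻¹) * ν.toReal⁻¹ * (2:ℝ) ^ (-(j:ℝ) * s * p)) := by
    rw [hμA, hre, ← hrsp]
    rw [ENNReal.ofReal_mul (by positivity), ENNReal.ofReal_mul (by positivity)]
    have hν' : ENNReal.ofReal ν.toReal⁻¹ = ν⁻¹ := by
      rw [ENNReal.ofReal_inv_of_pos hνreal, ENNReal.ofReal_toReal hνtop]
    rw [hν']
    have hcancel : (ENNReal.ofReal (r ^ n))⁻¹ * ENNReal.ofReal (r ^ n) = 1 :=
      ENNReal.inv_mul_cancel hrn0 hrnt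
    calc (ENNReal.ofReal (r ^ n) * ν)⁻¹ * (ENNReal.ofReal (1 + γ⁻¹) *
        (ENNReal.ofReal (r ^ n) * ENNReal.ofReal (r ^ (s * p))))
        = ((ENNReal.ofReal (r ^ n))⁻¹ * ENNReal.ofReal (r ^ n)) *
          (ν⁻¹ * (ENNReal.ofReal (1 + γ⁻¹) * ENNReal.ofReal (r ^ (s * p)))) := by
          rw [ENNReal.mul_inv (Or.inl hrn0) (Or.inl hrnt)]; ring
      _ = ENNReal.ofReal (1 + γ⁻¹) * ν⁻¹ * ENNReal.ofReal (r ^ (s * p)) := by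
          rw [hcancel, one_mul]; ring
  calc (volume A)⁻¹ * ∫⁻ z in A, ENNReal.ofReal (|u z - med volume γ u A| ^ p)
      ≤ (volume A)⁻¹ * (ENNReal.ofReal (1 + γ⁻¹) * I) := mul_le_mul_right htotal _
    _ ≤ (volume A)⁻¹ * (ENNReal.ofReal (1 + γ⁻¹) *
        (ENNReal.ofReal (r ^ ((n:ℝ) + s * p)) * J)) :=
        mul_le_mul_right (mul_le_mul_right hIJ _) _
    _ = ((volume A)⁻¹ * (ENNReal.ofReal (1 + γ⁻¹) *
        ENNReal.ofReal (r ^ ((n:ℝ) + s * p)))) * J := by ring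
    _ = ENNReal.ofReal ((1 + γ⁻¹) * ν.toReal⁻¹ * (2:ℝ) ^ (-(j:ℝ) * s * p)) * J := by
        rw [hcoef]
end
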